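/- arXiv:1810.00863 — 4 statements merged into one kernel-verified Lean document; each statement's English description precedes it below -/
import Mathlib

section
/- Let H be a (possibly unbounded) self-adjoint operator on a separable complex Hilbert space ℋ, let α ∈ (0,1], and let φ₀ ∈ D(|H|^α). Then the unitary one-parameter group T_t^S := e^{-itH} satisfies, for all t, s ≥ 0, ‖T_t^S φ₀ − T_s^S φ₀‖ ≤ g_α ‖|H|^α φ₀‖ |t − s|^α. -/
open scoped ENNReal NNReal
open MeasureTheory

noncomputable section

local notation "⟪" x ", " y "⟫" => @inner ℂ _ _ x y

/-- `ζ_α := (2α/(1-α))^{1-α} + 2(2α/(1-α))^{-α}` for `α ∈ (0,1)`, and `ζ₁ := 1`. -/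
def zetaC (α : ℝ) : ℝ :=
  if α = 1 then 1 else (2 * α / (1 - α)) ^ (1 - α) + 2 * (2 * α / (1 - α)) ^ (-α)

/-- `g_α := ζ_α (1-α)^{(1-α)/2} α^{α/2}`. -/
def gC (α : ℝ) : ℝ := zetaC α * (1 - α) ^ ((1 - α) / 2) * α ^ (α / 2)

/-- The `p`-th absolute spectral moment `∫ |s|^p dμ_x(s)` of the (vector-indexed) spectral
measure family `μ`; for the spectral measure of a self-adjoint operator `H` this is
`‖|H|^{p/2} x‖²` (possibly `∞`). -/
def specMoment {ℋ : Type*} [NormedAddCommGroup ℋ] [InnerProductSpace ℂ ℋ]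
    (μ : ℋ → Measure ℝ) (p : ℝ) (x : ℋ) : ℝ≥0∞ :=
  ∫⁻ s, ENNReal.ofReal (|s| ^ p) ∂(μ x)

/-! ### Auxiliary lemmas -/

lemma zeta_id {α : ℝ} (h0 : 0 < α) (h1 : α < 1) :
    zetaC α * ((1 - α) ^ (1 - α) * α ^ α) = 2 ^ (1 - α) := by
  have hb : (0:ℝ) < 1 - α := by linarith
  rw [zetaC, if_neg (by linarith : α ≠ 1)]
  rw [Real.div_rpow (by positivity) hb.le, Real.div_rpow (by positivity) hb.le,
    Real.mul_rpow (by norm_num) h0.le, Real.mul_rpow (by norm_num) h0.le]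
  have e1 : α ^ (1 - α) * α ^ α = α := by
    rw [← Real.rpow_add h0]; norm_num
  have e2 : (1 - α) ^ (-α) = ((1 - α) ^ α)⁻¹ := Real.rpow_neg hb.le α
  have e3 : α ^ (-α) = (α ^ α)⁻¹ := Real.rpow_neg h0.le α
  have e4 : (2:ℝ) ^ (-α) * 2 = 2 ^ (1 - α) := by
    have : (2:ℝ) ^ (-α) * 2 ^ (1:ℝ) = 2 ^ (1 - α) := by
      rw [← Real.rpow_add (by norm_num)]; ring_nf
    simpa using this
  have e5 : (1 - α) ^ α * (1 - α) ^ (1 - α) = 1 - α := by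
    rw [← Real.rpow_add hb]; norm_num
  have p1 : (0:ℝ) < α ^ α := Real.rpow_pos_of_pos h0 _
  have p2 : (0:ℝ) < (1 - α) ^ (1 - α) := Real.rpow_pos_of_pos hb _
  have p3 : (0:ℝ) < (1 - α) ^ α := Real.rpow_pos_of_pos hb _
  have p4 : (0:ℝ) < α ^ (1 - α) := Real.rpow_pos_of_pos h0 _
  have p5 : (0:ℝ) < (2:ℝ) ^ (-α) := Real.rpow_pos_of_pos (by norm_num) _
  rw [e2, e3]
  field_simp
  nlinarith [mul_pos p1 p2, mul_pos p3 p4, sq_nonneg (α ^ α),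
    mul_pos (mul_pos p1 p2) p3]

lemma gC_ge {α : ℝ} (h0 : 0 < α) (h1 : α ≤ 1) : 2 ^ (1 - α) ≤ gC α := by
  rcases eq_or_lt_of_le h1 with rfl | h1
  · simp [gC, zetaC]
  have hb : (0:ℝ) < 1 - α := by linarith
  have e : gC α * (α ^ (α/2) * (1 - α) ^ ((1-α)/2)) = 2 ^ (1 - α) := by
    have h2 : α ^ (α/2) * α ^ (α/2) = α ^ α := by
      rw [← Real.rpow_add h0]; ring_nf
    have h3 : (1-α) ^ ((1-α)/2) * (1-α) ^ ((1-α)/2) = (1-α) ^ (1-α) := by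
      rw [← Real.rpow_add hb]; ring_nf
    calc gC α * (α ^ (α/2) * (1 - α) ^ ((1-α)/2))
        = zetaC α * (((1-α) ^ ((1-α)/2) * (1-α) ^ ((1-α)/2)) * (α ^ (α/2) * α ^ (α/2))) := by
          rw [gC]; ring
      _ = 2 ^ (1 - α) := by rw [h2, h3, zeta_id h0 h1]
  have hd : α ^ (α/2) * (1 - α) ^ ((1-α)/2) ≤ 1 := by
    have := Real.rpow_le_one h0.le h1.le (by positivity : (0:ℝ) ≤ α/2)
    have := Real.rpow_le_one hb.le (by linarith) (by positivity : (0:ℝ) ≤ (1-α)/2)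
    nlinarith [Real.rpow_nonneg h0.le (α/2), Real.rpow_nonneg hb.le ((1-α)/2)]
  have hdpos : 0 < α ^ (α/2) * (1 - α) ^ ((1-α)/2) := by positivity
  nlinarith [Real.rpow_pos_of_pos (by norm_num : (0:ℝ) < 2) (1 - α)]

lemma gC_nonneg {α : ℝ} (h0 : 0 < α) (h1 : α ≤ 1) : 0 ≤ gC α :=
  le_trans (Real.rpow_pos_of_pos (by norm_num) (1 - α)).le (gC_ge h0 h1)

lemma two_sub_cos_le (u : ℝ) : 2 - 2 * Real.cos u ≤ u ^ 2 := by
  have h1 : |Real.sin (u/2)| = Real.sqrt ((1 - Real.cos u)/2) := Real.abs_sin_half u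
  have h2 : Real.sin (u/2) ^ 2 = (1 - Real.cos u)/2 := by
    rw [← sq_abs, h1, Real.sq_sqrt (by nlinarith [Real.cos_le_one u])]
  have h3 : Real.sin (u/2) ^ 2 ≤ (u/2) ^ 2 := Real.sin_sq_le_sq
  nlinarith

lemma cos_bound {α : ℝ} (h0 : 0 < α) (h1 : α ≤ 1) (u : ℝ) :
    2 - 2 * Real.cos u ≤ 2 ^ (2 - 2*α) * |u| ^ (2*α) := by
  have habs : (0:ℝ) ≤ |u| := abs_nonneg u
  rcases eq_or_ne u 0 with rfl | hu
  · simp [Real.zero_rpow (by positivity : 2*α ≠ 0)]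
  have hupos : 0 < |u| := abs_pos.mpr hu
  rcases le_or_gt |u| 2 with hle | hgt
  · have e : |u| ^ ((2:ℝ)) = |u| ^ (2*α) * |u| ^ (2 - 2*α) := by
      rw [← Real.rpow_add hupos]; ring_nf
    have e2 : u ^ 2 = |u| ^ ((2:ℝ)) := by
      rw [← sq_abs]
      rw [← Real.rpow_natCast |u| 2]
      norm_num
    have h4 : |u| ^ (2 - 2*α) ≤ 2 ^ (2 - 2*α) :=
      Real.rpow_le_rpow habs hle (by linarith)
    calc 2 - 2 * Real.cos u ≤ u ^ 2 := two_sub_cos_le u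
      _ = |u| ^ (2*α) * |u| ^ (2 - 2*α) := by rw [e2, e]
      _ ≤ |u| ^ (2*α) * 2 ^ (2 - 2*α) := by
          exact mul_le_mul_of_nonneg_left h4 (Real.rpow_nonneg habs _)
      _ = 2 ^ (2 - 2*α) * |u| ^ (2*α) := mul_comm _ _
  · have h4 : (2:ℝ) ^ (2*α) ≤ |u| ^ (2*α) :=
      Real.rpow_le_rpow (by norm_num) hgt.le (by positivity)
    have e : (2:ℝ) ^ (2 - 2*α) * 2 ^ (2*α) = 4 := by
      rw [← Real.rpow_add (by norm_num)]; norm_num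
    calc 2 - 2 * Real.cos u ≤ 4 := by nlinarith [Real.neg_one_le_cos u]
      _ = 2 ^ (2 - 2*α) * 2 ^ (2*α) := e.symm
      _ ≤ 2 ^ (2 - 2*α) * |u| ^ (2*α) := by
          exact mul_le_mul_of_nonneg_left h4 (Real.rpow_nonneg (by norm_num) _)

/-- The main quantitative estimate: `‖T_r φ₀ - φ₀‖² ≤ 2^{2-2α} |r|^{2α} M²` where
`M² = ∫ |s|^{2α} dμ_{φ₀}`. -/
lemma sq_norm_le
    {ℋ : Type*} [NormedAddCommGroup ℋ] [InnerProductSpace ℂ ℋ] [CompleteSpace ℋ]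
    (μ : ℋ → Measure ℝ)
    (hμtot : ∀ x : ℋ, μ x Set.univ = ENNReal.ofReal (‖x‖ ^ 2))
    (T : ℝ → ℋ →L[ℂ] ℋ)
    (hTiso : ∀ (t : ℝ) (x : ℋ), ‖T t x‖ = ‖x‖)
    (hμT : ∀ (x : ℋ) (t : ℝ), ⟪x, T t x⟫ = ∫ s, Complex.exp (-(Complex.I * t * s)) ∂(μ x))
    (α : ℝ) (hα : α ∈ Set.Ioc (0 : ℝ) 1)
    (φ₀ : ℋ) (hmom : specMoment μ (2 * α) φ₀ ≠ ∞) (r : ℝ) (M : ℝ)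
    (hAnorm2 : ENNReal.ofReal (M ^ 2) = specMoment μ (2 * α) φ₀) :
    ‖T r φ₀ - φ₀‖ ^ 2 ≤ 2 ^ (2 - 2*α) * |r| ^ (2*α) * M ^ 2 := by
  obtain ⟨h0, h1⟩ := hα
  set ν := μ φ₀ with hν
  have hfin : IsFiniteMeasure ν := ⟨by rw [hν, hμtot]; exact ENNReal.ofReal_lt_top⟩
  have hmeas : Measurable fun s : ℝ => |s| ^ (2*α) :=
    (continuous_abs.rpow_const (fun x => Or.inr (by positivity))).measurable
  have hnn : ∀ s : ℝ, 0 ≤ |s| ^ (2*α) := fun s => Real.rpow_nonneg (abs_nonneg s) _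
  have hint2a : Integrable (fun s : ℝ => |s| ^ (2*α)) ν := by
    refine ⟨hmeas.aestronglyMeasurable, ?_⟩
    rw [hasFiniteIntegral_iff_ofReal (ae_of_all _ hnn)]
    exact lt_of_le_of_ne le_top hmom
  have hAnorm : ∫ s, |s| ^ (2*α) ∂ν = M ^ 2 := by
    rw [integral_eq_lintegral_of_nonneg_ae (ae_of_all _ hnn) hmeas.aestronglyMeasurable]
    rw [show ∫⁻ s, ENNReal.ofReal (|s| ^ (2*α)) ∂ν = specMoment μ (2*α) φ₀ from rfl,
      ← hAnorm2, ENNReal.toReal_ofReal (sq_nonneg M)]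
  have hexpmeas : Measurable fun s : ℝ => Complex.exp (-(Complex.I * r * s)) := by
    fun_prop
  have hexp_int : Integrable (fun s : ℝ => Complex.exp (-(Complex.I * r * s))) ν := by
    refine Integrable.mono' (integrable_const 1) hexpmeas.aestronglyMeasurable
      (ae_of_all _ fun s => ?_)
    rw [show (-(Complex.I * r * s)) = ((-(r*s) : ℝ) : ℂ) * Complex.I by push_cast; ring]
    rw [Complex.norm_exp_ofReal_mul_I]
  have hcosmeas : Measurable fun s : ℝ => Real.cos (r * s) := by fun_prop
  have hcos_int : Integrable (fun s : ℝ => Real.cos (r * s)) ν := by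
    refine Integrable.mono' (integrable_const 1) hcosmeas.aestronglyMeasurable
      (ae_of_all _ fun s => by rw [Real.norm_eq_abs]; exact Real.abs_cos_le_one _)
  have hre : Complex.re ⟪φ₀, T r φ₀⟫ = ∫ s, Real.cos (r * s) ∂ν := by
    rw [hμT φ₀ r, ← RCLike.re_to_complex, ← integral_re hexp_int]
    refine integral_congr_ae (ae_of_all _ fun s => ?_)
    simp only [RCLike.re_to_complex]
    rw [show (-(Complex.I * (r:ℂ) * (s:ℂ))) = ((-(r*s) : ℝ) : ℂ) * Complex.I by push_cast; ring,
      Complex.exp_ofReal_mul_I_re, Real.cos_neg]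
  have hnormφ : (ν Set.univ).toReal = ‖φ₀‖ ^ 2 := by
    rw [hν, hμtot, ENNReal.toReal_ofReal (sq_nonneg _)]
  have hsq : ‖T r φ₀ - φ₀‖ ^ 2 = ∫ s, (2 - 2 * Real.cos (r * s)) ∂ν := by
    have h := @norm_sub_sq ℂ ℋ _ _ _ φ₀ (T r φ₀)
    simp only [RCLike.re_to_complex] at h
    have lhs : ‖T r φ₀ - φ₀‖ ^ 2 = 2 * ‖φ₀‖ ^ 2 - 2 * ∫ s, Real.cos (r * s) ∂ν := by
      rw [norm_sub_rev, h, hTiso r φ₀, hre]; ring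
    have rhs : ∫ s, (2 - 2 * Real.cos (r * s)) ∂ν
        = 2 * ‖φ₀‖ ^ 2 - 2 * ∫ s, Real.cos (r * s) ∂ν := by
      rw [integral_sub (integrable_const 2) (hcos_int.const_mul 2), integral_const,
        integral_const_mul, smul_eq_mul, measureReal_def, hnormφ]; ring
    rw [lhs, rhs]
  have hptwise : ∀ s : ℝ, 2 - 2 * Real.cos (r * s)
      ≤ 2 ^ (2 - 2*α) * |r| ^ (2*α) * |s| ^ (2*α) := fun s => by
    have h := cos_bound h0 h1 (r * s)
    rwa [abs_mul, Real.mul_rpow (abs_nonneg r) (abs_nonneg s), ← mul_assoc] at h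
  calc ‖T r φ₀ - φ₀‖ ^ 2 = ∫ s, (2 - 2 * Real.cos (r * s)) ∂ν := hsq
    _ ≤ ∫ s, 2 ^ (2 - 2*α) * |r| ^ (2*α) * |s| ^ (2*α) ∂ν := by
        refine integral_mono_of_nonneg (ae_of_all _ fun s => ?_)
          (hint2a.const_mul _) (ae_of_all _ hptwise)
        simp only [Pi.zero_apply]
        nlinarith [Real.cos_le_one (r * s)]
    _ = 2 ^ (2 - 2*α) * |r| ^ (2*α) * M ^ 2 := by
        rw [integral_const_mul, hAnorm]

/-- Closed systems 1, autonomous case.  `H` is an (unbounded) self-adjoint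
operator on a separable complex Hilbert space, encoded together with its spectral measure
family `μ` (`μ x` is the spectral measure of `H` at the vector `x`, so that
`⟪x, e^{-itH} x⟫ = ∫ e^{-its} dμ_x(s)` and `μ x (ℝ) = ‖x‖²`).  `T` is the unitary
one-parameter group `T_t = e^{-itH}` generated by `H`, and `A = |H|^α` is the fractional
power of `|H|`, characterized by `‖A x‖² = ∫ |s|^{2α} dμ_x(s)` on its natural domain.
Then for `φ₀ ∈ D(|H|^α)` and all `t, s ≥ 0`:
`‖T_t φ₀ − T_s φ₀‖ ≤ g_α ‖|H|^α φ₀‖ |t − s|^α`. -/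
theorem statement0
    {ℋ : Type*} [NormedAddCommGroup ℋ] [InnerProductSpace ℂ ℋ] [CompleteSpace ℋ]
    [TopologicalSpace.SeparableSpace ℋ]
    (H : ℋ →ₗ.[ℂ] ℋ) (hHsa : IsSelfAdjoint H)
    (μ : ℋ → Measure ℝ)
    (hμtot : ∀ x : ℋ, μ x Set.univ = ENNReal.ofReal (‖x‖ ^ 2))
    (hHdom : ∀ x : ℋ, x ∈ H.domain ↔ specMoment μ 2 x ≠ ∞)
    (hHval : ∀ x : H.domain, ⟪(x : ℋ), H x⟫ = ∫ s, (s : ℂ) ∂(μ x))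
    (T : ℝ → ℋ →L[ℂ] ℋ)
    (hT0 : T 0 = ContinuousLinearMap.id ℂ ℋ)
    (hTadd : ∀ t s : ℝ, (T t).comp (T s) = T (t + s))
    (hTiso : ∀ (t : ℝ) (x : ℋ), ‖T t x‖ = ‖x‖)
    (hμT : ∀ (x : ℋ) (t : ℝ), ⟪x, T t x⟫ = ∫ s, Complex.exp (-(Complex.I * t * s)) ∂(μ x))
    (α : ℝ) (hα : α ∈ Set.Ioc (0 : ℝ) 1)
    (A : ℋ →ₗ.[ℂ] ℋ)
    (hAdom : ∀ x : ℋ, x ∈ A.domain ↔ specMoment μ (2 * α) x ≠ ∞)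
    (hAval : ∀ x : A.domain, ENNReal.ofReal (‖A x‖ ^ 2) = specMoment μ (2 * α) (x : ℋ))
    (φ₀ : ℋ) (hφ₀ : φ₀ ∈ A.domain) :
    ∀ t s : ℝ, 0 ≤ t → 0 ≤ s →
      ‖T t φ₀ - T s φ₀‖ ≤ gC α * ‖A ⟨φ₀, hφ₀⟩‖ * |t - s| ^ α := by
  obtain ⟨h0, h1⟩ := hα
  set M := ‖A ⟨φ₀, hφ₀⟩‖ with hM
  have hM0 : 0 ≤ M := norm_nonneg _
  have hmom : specMoment μ (2 * α) φ₀ ≠ ∞ := (hAdom φ₀).mp hφ₀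
  have hAnorm2 : ENNReal.ofReal (M ^ 2) = specMoment μ (2 * α) φ₀ := hAval ⟨φ₀, hφ₀⟩
  -- key bound for a single time difference
  have key : ∀ r : ℝ, ‖T r φ₀ - φ₀‖ ≤ gC α * M * |r| ^ α := by
    intro r
    have hsq := sq_norm_le μ hμtot T hTiso hμT α ⟨h0, h1⟩ φ₀ hmom r M hAnorm2
    have hg := gC_ge h0 h1
    have hg0 : 0 ≤ gC α := gC_nonneg h0 h1
    have e1 : ((2:ℝ) ^ (1 - α)) ^ 2 = 2 ^ (2 - 2*α) := by
      rw [← Real.rpow_natCast ((2:ℝ) ^ (1 - α)) 2, ← Real.rpow_mul (by norm_num)]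
      norm_num; ring_nf
    have e2 : (|r| ^ α) ^ 2 = |r| ^ (2*α) := by
      rw [← Real.rpow_natCast (|r| ^ α) 2, ← Real.rpow_mul (abs_nonneg r)]
      norm_num; ring_nf
    have h2 : ‖T r φ₀ - φ₀‖ ^ 2 ≤ (gC α * M * |r| ^ α) ^ 2 := by
      have hgg : 2 ^ (2 - 2*α) ≤ (gC α) ^ 2 := by
        rw [← e1]; exact pow_le_pow_left₀ (Real.rpow_pos_of_pos (by norm_num) _).le hg 2
      have hr : 0 ≤ |r| ^ (2*α) := Real.rpow_nonneg (abs_nonneg r) _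
      calc ‖T r φ₀ - φ₀‖ ^ 2 ≤ 2 ^ (2 - 2*α) * |r| ^ (2*α) * M ^ 2 := hsq
        _ ≤ (gC α) ^ 2 * |r| ^ (2*α) * M ^ 2 := by
            exact mul_le_mul_of_nonneg_right
              (mul_le_mul_of_nonneg_right hgg hr) (sq_nonneg M)
        _ = (gC α * M * |r| ^ α) ^ 2 := by rw [← e2]; ring
    have hb : 0 ≤ gC α * M * |r| ^ α := by positivity
    exact (pow_le_pow_iff_left₀ (norm_nonneg _) hb two_ne_zero).mp h2
  intro t s ht hs
  -- group reduction: T t φ₀ - T s φ₀ = T s (T (t-s) φ₀ - φ₀)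
  have hTt : T s (T (t - s) φ₀) = T t φ₀ := by
    have h := hTadd s (t - s)
    have : s + (t - s) = t := by ring
    rw [this] at h
    rw [← h]; rfl
  have hnorm : ‖T t φ₀ - T s φ₀‖ = ‖T (t - s) φ₀ - φ₀‖ := by
    rw [← hTt, ← map_sub, hTiso]
  rw [hnorm]
  exact key (t - s)

end
end

section
/- Let (T_t)_{t≥0} be a contraction semigroup on a Banach space X with generator A, and let α ∈ (0,1]. Then x ∈ F_α if and only if sup_{λ>0} ‖λ^α A(λI − A)^{-1} x‖ < ∞, and in that case |x|_{F_α} ≤ ζ_α · sup_{λ>0} ‖λ^α A(λI − A)^{-1} x‖. -/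
open Filter Topology MeasureTheory Set

noncomputable section

/-- Favard spaces via resolvents.  Let `(T_t)_{t≥0}` be a contraction
semigroup on a Banach space `X` with generator `A` and resolvents `R λ = (λI − A)^{-1}`
(`λ > 0`).  Since `A(λI − A)^{-1}x = λ R_λ x − x`, the statement reads: `x ∈ F_α`
(i.e. `∃ C, ∀ t > 0, ‖T_t x − x‖ ≤ C t^α`) iff `sup_{λ>0} ‖λ^α A(λI−A)^{-1}x‖ < ∞`, and
whenever the latter is bounded by `M`, the Favard seminorm satisfies
`‖T_t x − x‖ ≤ ζ_α M t^α` for all `t > 0`. -/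
theorem statement10
    {X : Type*} [NormedAddCommGroup X] [NormedSpace ℂ X] [CompleteSpace X]
    (T : ℝ → X →L[ℂ] X)
    (hT0 : T 0 = ContinuousLinearMap.id ℂ X)
    (hTadd : ∀ t s : ℝ, 0 ≤ t → 0 ≤ s → (T t).comp (T s) = T (t + s))
    (hTcontr : ∀ t : ℝ, 0 ≤ t → ∀ x : X, ‖T t x‖ ≤ ‖x‖)
    (hTcont : ∀ x : X, ContinuousOn (fun t : ℝ => T t x) (Set.Ici 0))
    (A : X →ₗ.[ℂ] X)
    (hAdom : ∀ x : X, x ∈ A.domain ↔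
      ∃ y : X, Tendsto (fun t : ℝ => t⁻¹ • (T t x - x)) (𝓝[>] 0) (𝓝 y))
    (hAval : ∀ x : A.domain,
      Tendsto (fun t : ℝ => t⁻¹ • (T t (x : X) - (x : X))) (𝓝[>] 0) (𝓝 (A x)))
    -- the resolvents `R λ = (λI − A)^{-1}` of the generator, for `λ > 0`
    (R : ℝ → X →L[ℂ] X)
    (hRres : ∀ lam : ℝ, 0 < lam → ∀ x : X,
      ∃ hmem : R lam x ∈ A.domain, (lam : ℂ) • R lam x - A ⟨R lam x, hmem⟩ = x)
    (hRleft : ∀ lam : ℝ, 0 < lam → ∀ x : A.domain,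
      R lam ((lam : ℂ) • (x : X) - A x) = (x : X))
    (α : ℝ) (hα : α ∈ Set.Ioc (0 : ℝ) 1)
    (x : X) :
    ((∃ C : ℝ, ∀ t : ℝ, 0 < t → ‖T t x - x‖ ≤ C * t ^ α) ↔
      (∃ M : ℝ, ∀ lam : ℝ, 0 < lam →
        ‖((lam ^ α : ℝ) : ℂ) • ((lam : ℂ) • R lam x - x)‖ ≤ M)) ∧
    (∀ M : ℝ,
      (∀ lam : ℝ, 0 < lam →
        ‖((lam ^ α : ℝ) : ℂ) • ((lam : ℂ) • R lam x - x)‖ ≤ M) →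
      ∀ t : ℝ, 0 < t → ‖T t x - x‖ ≤ zetaC α * M * t ^ α) := by
  obtain ⟨hα0, hα1⟩ := hα
  have hT0x : ∀ z : X, T 0 z = z := fun z => by rw [hT0]; rfl
  have hTaddx : ∀ a s : ℝ, 0 ≤ a → 0 ≤ s → ∀ z, T a (T s z) = T (a + s) z := by
    intro a s ha hs z
    have h := hTadd a s ha hs
    calc T a (T s z) = ((T a).comp (T s)) z := rfl
    _ = T (a + s) z := by rw [h]
  -- MVT bound on the domain
  have hdom : ∀ y : A.domain, ∀ t : ℝ, 0 < t →
      ‖T t (y : X) - (y : X)‖ ≤ t * ‖A y‖ := by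
    intro y t ht
    have key := norm_image_sub_le_of_norm_deriv_right_le_segment
      (f := fun s : ℝ => T s (y : X)) (f' := fun s : ℝ => T s (A y)) (C := ‖A y‖)
      (a := 0) (b := t)
      ((hTcont (y : X)).mono Set.Icc_subset_Ici_self) ?_ ?_ t (Set.right_mem_Icc.2 ht.le)
    · have h0 : T 0 (y : X) = (y : X) := hT0x _
      simp only [h0] at key
      linarith [key]
    · intro s hs
      rw [hasDerivWithinAt_iff_tendsto_slope, Set.Ici_sdiff_left]
      have h1 : Tendsto (fun u : ℝ => u - s) (𝓝[>] s) (𝓝[>] 0) := by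
        apply tendsto_nhdsWithin_of_tendsto_nhds_of_eventually_within
        · have h2 : Tendsto (fun u : ℝ => u - s) (𝓝 s) (𝓝 (s - s)) :=
            (continuous_id.sub continuous_const).tendsto s
          simpa using h2.mono_left nhdsWithin_le_nhds
        · filter_upwards [self_mem_nhdsWithin] with u hu
          simpa [Set.mem_Ioi] using sub_pos.2 (Set.mem_Ioi.1 hu)
      have h2 := ((T s).continuous.tendsto (A y)).comp ((hAval y).comp h1)
      refine h2.congr' ?_
      filter_upwards [self_mem_nhdsWithin] with u hu
      have hus : s < u := hu
      have h0s : 0 ≤ s := hs.1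
      have hsplit : T u (y : X) = T s (T (u - s) (y : X)) := by
        rw [hTaddx s (u - s) h0s (by linarith)]
        ring_nf
      show T s ((u - s)⁻¹ • (T (u - s) (y : X) - (y : X)))
          = slope (fun s : ℝ => T s (y : X)) s u
      rw [slope_def_module, hsplit, ← map_sub, ← (T s).map_smul_of_tower]
    · intro s hs
      exact hTcontr s hs.1 (A y)
  -- Quantitative estimate (second conjunct)
  have quant : ∀ M : ℝ,
      (∀ lam : ℝ, 0 < lam →
        ‖((lam ^ α : ℝ) : ℂ) • ((lam : ℂ) • R lam x - x)‖ ≤ M) →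
      ∀ t : ℝ, 0 < t → ‖T t x - x‖ ≤ zetaC α * M * t ^ α := by
    intro M hM t ht
    have hM0 : 0 ≤ M := le_trans (norm_nonneg _) (hM 1 one_pos)
    have main : ∀ lam : ℝ, 0 < lam →
        ‖T t x - x‖ ≤ M * (t * lam ^ ((1:ℝ) - α)) + 2 * (M * lam ^ (-α)) := by
      intro lam hlam
      obtain ⟨hmem, hres⟩ := hRres lam hlam x
      set y : A.domain := ⟨R lam x, hmem⟩ with hy
      have hAy : A y = (lam : ℂ) • R lam x - x := by
        have h2 : (lam : ℂ) • R lam x = x + A y := sub_eq_iff_eq_add.mp hres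
        rw [h2]; abel
      have hresnorm : ‖(lam : ℂ) • R lam x - x‖ ≤ M * lam ^ (-α) := by
        have h1 := hM lam hlam
        rw [norm_smul, Complex.norm_real, Real.norm_eq_abs,
          abs_of_pos (Real.rpow_pos_of_pos hlam α)] at h1
        have h2 : lam ^ (-α) * (lam ^ α * ‖(lam : ℂ) • R lam x - x‖) ≤ lam ^ (-α) * M :=
          mul_le_mul_of_nonneg_left h1 (Real.rpow_pos_of_pos hlam (-α)).le
        rw [← mul_assoc, ← Real.rpow_add hlam] at h2
        simpa [mul_comm] using h2
      -- the domain part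
      set y' : A.domain := (lam : ℂ) • y with hy'
      have hy'c : (y' : X) = (lam : ℂ) • R lam x := rfl
      have hAy' : A y' = (lam : ℂ) • ((lam : ℂ) • R lam x - x) := by
        rw [hy', A.map_smul, hAy]
      have hd := hdom y' t ht
      rw [hy'c, hAy'] at hd
      have hAy'norm : ‖(lam : ℂ) • ((lam : ℂ) • R lam x - x)‖ ≤ lam * (M * lam ^ (-α)) := by
        rw [norm_smul, Complex.norm_real, Real.norm_eq_abs, abs_of_pos hlam]
        exact mul_le_mul_of_nonneg_left hresnorm hlam.le
      -- the remainder part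
      have hw : ‖T t (x - (lam : ℂ) • R lam x) - (x - (lam : ℂ) • R lam x)‖
          ≤ 2 * (M * lam ^ (-α)) := by
        have h2 : ‖x - (lam : ℂ) • R lam x‖ ≤ M * lam ^ (-α) := by
          rw [← norm_neg]; simpa using hresnorm
        calc ‖T t (x - (lam : ℂ) • R lam x) - (x - (lam : ℂ) • R lam x)‖
            ≤ ‖T t (x - (lam : ℂ) • R lam x)‖ + ‖x - (lam : ℂ) • R lam x‖ := norm_sub_le _ _
          _ ≤ ‖x - (lam : ℂ) • R lam x‖ + ‖x - (lam : ℂ) • R lam x‖ := by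
              linarith [hTcontr t ht.le (x - (lam : ℂ) • R lam x)]
          _ ≤ 2 * (M * lam ^ (-α)) := by linarith
      have hdecomp : T t x - x = (T t ((lam : ℂ) • R lam x) - (lam : ℂ) • R lam x)
          + (T t (x - (lam : ℂ) • R lam x) - (x - (lam : ℂ) • R lam x)) := by
        rw [map_sub]; abel
      have hll : lam * lam ^ (-α) = lam ^ ((1:ℝ) - α) := by
        rw [show (1:ℝ) - α = 1 + (-α) by ring, Real.rpow_add hlam, Real.rpow_one]
      calc ‖T t x - x‖
          ≤ ‖T t ((lam : ℂ) • R lam x) - (lam : ℂ) • R lam x‖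
            + ‖T t (x - (lam : ℂ) • R lam x) - (x - (lam : ℂ) • R lam x)‖ := by
            rw [hdecomp]; exact norm_add_le _ _
        _ ≤ t * (lam * (M * lam ^ (-α))) + 2 * (M * lam ^ (-α)) := by
            have := le_trans hd (mul_le_mul_of_nonneg_left hAy'norm ht.le)
            linarith
        _ = M * (t * lam ^ ((1:ℝ) - α)) + 2 * (M * lam ^ (-α)) := by
            rw [← hll]; ring
    by_cases hone : α = 1
    · subst hone
      rw [zetaC, if_pos rfl, Real.rpow_one, one_mul]
      have hlim : Tendsto (fun lam : ℝ => M * (t * lam ^ ((1:ℝ) - 1)) + 2 * (M * lam ^ (-(1:ℝ))))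
          atTop (𝓝 (M * t)) := by
        have h1 : (fun lam : ℝ => M * (t * lam ^ ((1:ℝ) - 1)) + 2 * (M * lam ^ (-(1:ℝ))))
            =ᶠ[atTop] fun lam : ℝ => M * t + 2 * M * lam⁻¹ := by
          filter_upwards [eventually_gt_atTop (0:ℝ)] with lam hlam
          rw [show (1:ℝ) - 1 = 0 by ring, Real.rpow_zero, Real.rpow_neg_one]
          ring
        rw [tendsto_congr' h1]
        have h2 : Tendsto (fun lam : ℝ => M * t + 2 * M * lam⁻¹) atTop (𝓝 (M * t + 2 * M * 0)) :=
          tendsto_const_nhds.add (tendsto_inv_atTop_zero.const_mul (2 * M))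
        simpa using h2
      apply ge_of_tendsto hlim
      filter_upwards [eventually_gt_atTop (0:ℝ)] with lam hlam
      exact main lam hlam
    · have hα1' : α < 1 := lt_of_le_of_ne hα1 hone
      set c : ℝ := 2 * α / (1 - α) with hc
      have hcpos : 0 < c := div_pos (by linarith) (by linarith)
      have hlam : 0 < c / t := div_pos hcpos ht
      have h1 : (c / t) ^ ((1:ℝ) - α) = c ^ ((1:ℝ) - α) * t ^ (α - 1) := by
        rw [div_eq_mul_inv, Real.mul_rpow hcpos.le (inv_nonneg.2 ht.le),
          ← Real.rpow_neg_one t, ← Real.rpow_mul ht.le,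
          show (-1 : ℝ) * ((1:ℝ) - α) = α - 1 by ring]
      have h2 : (c / t) ^ (-α) = c ^ (-α) * t ^ α := by
        rw [div_eq_mul_inv, Real.mul_rpow hcpos.le (inv_nonneg.2 ht.le),
          ← Real.rpow_neg_one t, ← Real.rpow_mul ht.le,
          show (-1 : ℝ) * (-α) = α by ring]
      have ht1 : t * t ^ (α - 1) = t ^ α := by
        nth_rewrite 1 [← Real.rpow_one t]
        rw [← Real.rpow_add ht, show (1:ℝ) + (α - 1) = α by ring]
      have := main (c / t) hlam
      rw [zetaC, if_neg hone]
      calc ‖T t x - x‖ ≤ M * (t * (c / t) ^ ((1:ℝ) - α)) + 2 * (M * (c / t) ^ (-α)) := this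
        _ = M * (c ^ ((1:ℝ) - α) * (t * t ^ (α - 1))) + 2 * (M * (c ^ (-α) * t ^ α)) := by
            rw [h1, h2]; ring
        _ = (c ^ ((1:ℝ) - α) + 2 * c ^ (-α)) * M * t ^ α := by rw [ht1]; ring
        _ = (c ^ (1 - α) + 2 * c ^ (-α)) * M * t ^ α := by norm_num
  -- Forward direction
  have fwd : (∃ C : ℝ, ∀ t : ℝ, 0 < t → ‖T t x - x‖ ≤ C * t ^ α) →
      ∃ M : ℝ, ∀ lam : ℝ, 0 < lam →
        ‖((lam ^ α : ℝ) : ℂ) • ((lam : ℂ) • R lam x - x)‖ ≤ M := by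
    rintro ⟨C, hC⟩
    have hC0 : 0 ≤ C := by
      have h1 := hC 1 one_pos
      rw [Real.one_rpow, mul_one] at h1
      exact le_trans (norm_nonneg _) h1
    refine ⟨C * Real.Gamma (α + 1), ?_⟩
    intro lam hlam
    set g : ℝ → X := fun s => Real.exp (-(lam * s)) • T s x with hgdef
    have hgcont : ContinuousOn g (Ici 0) := by
      have h1 : ContinuousOn (fun s : ℝ => Real.exp (-(lam * s))) (Ici 0) := by fun_prop
      exact h1.smul (hTcont x)
    have hg0 : g 0 = x := by simp [hgdef, hT0x]
    have hgnorm : ∀ s : ℝ, 0 ≤ s → ‖g s‖ ≤ Real.exp (-(lam * s)) * ‖x‖ := by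
      intro s hs
      rw [hgdef]
      simp only [norm_smul, Real.norm_eq_abs, abs_of_pos (Real.exp_pos _)]
      exact mul_le_mul_of_nonneg_left (hTcontr s hs x) (Real.exp_pos _).le
    have hgmeas : ∀ a : ℝ, 0 ≤ a → AEStronglyMeasurable g (volume.restrict (Ioi a)) := by
      intro a ha
      exact ContinuousOn.aestronglyMeasurable
        (hgcont.mono (fun u hu => le_trans ha (le_of_lt hu))) measurableSet_Ioi
    have hgint : ∀ a : ℝ, 0 ≤ a → IntegrableOn g (Ioi a) := by
      intro a ha
      apply Integrable.mono' (g := fun s => ‖x‖ * Real.exp (-lam * s))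
      · exact ((exp_neg_integrableOn_Ioi a hlam).const_mul ‖x‖)
      · exact hgmeas a ha
      · rw [ae_restrict_iff' measurableSet_Ioi]
        apply ae_of_all
        intro s hs
        rw [neg_mul, mul_comm ‖x‖]
        exact hgnorm s (le_trans ha (le_of_lt hs))
    set Q : X := ∫ s in Ioi (0:ℝ), g s with hQdef
    set I : ℝ → X := fun h => ∫ s in Ioi h, g s with hIdef
    have hshift : ∀ h : ℝ, (∫ s in Ioi (0:ℝ), g (s + h)) = I h := by
      intro h
      have key := (measurePreserving_add_right volume h).setIntegral_preimage_emb
        (measurableEmbedding_addRight h) g (Ioi h)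
      have hpre : (fun s : ℝ => s + h) ⁻¹' (Ioi h) = Ioi 0 := by
        ext s; simp [Set.mem_Ioi]
      rw [hpre] at key
      exact key
    have hiden : ∀ h : ℝ, 0 < h →
        h⁻¹ • (T h Q - Q) =
          (h⁻¹ * (Real.exp (lam * h) - 1)) • I h - h⁻¹ • ∫ s in Ioc (0:ℝ) h, g s := by
      intro h hh
      have hTQ : T h Q = Real.exp (lam * h) • I h := by
        rw [hQdef, ((T h).integral_comp_comm (hgint 0 le_rfl)).symm, ← hshift h, ← integral_smul]
        apply setIntegral_congr_fun measurableSet_Ioi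
        intro s hs
        have hs' : 0 < s := hs
        show T h (g s) = Real.exp (lam * h) • g (s + h)
        rw [hgdef]
        simp only
        rw [(T h).map_smul_of_tower, hTaddx h s hh.le hs'.le, smul_smul, ← Real.exp_add,
          add_comm h s]
        ring_nf
      have hsplit : Q = (∫ s in Ioc (0:ℝ) h, g s) + I h := by
        rw [hQdef, hIdef, ← setIntegral_union (Set.Ioc_disjoint_Ioi le_rfl) measurableSet_Ioi
          ((hgint 0 le_rfl).mono_set Set.Ioc_subset_Ioi_self) (hgint h hh.le),
          Set.Ioc_union_Ioi_eq_Ioi hh.le]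
      rw [hTQ]
      nth_rewrite 1 [hsplit]
      rw [smul_sub, smul_smul]
      module
    have L1 : Tendsto (fun h : ℝ => h⁻¹ * (Real.exp (lam * h) - 1)) (𝓝[>] 0) (𝓝 lam) := by
      have hD : HasDerivAt (fun h : ℝ => Real.exp (lam * h)) lam 0 := by
        have := ((hasDerivAt_id (0:ℝ)).const_mul lam).exp
        simpa using this
      have h1 := hD.hasDerivWithinAt (s := Ioi 0)
      rw [hasDerivWithinAt_iff_tendsto_slope] at h1
      have hsub : Ioi (0:ℝ) \ {0} = Ioi 0 := by
        ext u
        simp only [Set.mem_diff, Set.mem_Ioi, Set.mem_singleton_iff, and_iff_left_iff_imp]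
        intro hu; exact ne_of_gt hu
      rw [hsub] at h1
      refine h1.congr ?_
      intro u
      rw [slope_def_field, mul_zero, Real.exp_zero]
      ring
    have L2 : Tendsto I (𝓝[>] 0) (𝓝 Q) := by
      rw [tendsto_iff_norm_sub_tendsto_zero]
      apply squeeze_zero_norm' (a := fun h : ℝ => ‖x‖ * h)
      · filter_upwards [self_mem_nhdsWithin] with h hh
        have hh' : 0 < h := hh
        have hIQ : I h - Q = -∫ s in Ioc (0:ℝ) h, g s := by
          have hsplit : Q = (∫ s in Ioc (0:ℝ) h, g s) + I h := by
            rw [hQdef, hIdef, ← setIntegral_union (Set.Ioc_disjoint_Ioi le_rfl) measurableSet_Ioi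
              ((hgint 0 le_rfl).mono_set Set.Ioc_subset_Ioi_self) (hgint h hh'.le),
              Set.Ioc_union_Ioi_eq_Ioi hh'.le]
          rw [hsplit]; abel
        rw [norm_norm, hIQ, norm_neg]
        have hb : ∀ s ∈ Ioc (0:ℝ) h, ‖g s‖ ≤ ‖x‖ := by
          intro s hs
          refine le_trans (hgnorm s hs.1.le) ?_
          nth_rewrite 2 [← one_mul ‖x‖]
          apply mul_le_mul_of_nonneg_right _ (norm_nonneg x)
          rw [← Real.exp_zero]
          apply Real.exp_le_exp.2
          simp only [neg_nonpos]
          exact mul_nonneg hlam.le hs.1.le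
        have key := norm_setIntegral_le_of_norm_le_const (μ := volume) (s := Ioc (0:ℝ) h)
          (by rw [Real.volume_Ioc]; exact ENNReal.ofReal_lt_top) hb
        rwa [Real.volume_real_Ioc_of_le hh'.le, sub_zero] at key
      · have h3 : Tendsto (fun h : ℝ => ‖x‖ * h) (𝓝 0) (𝓝 (‖x‖ * 0)) :=
          (continuous_const.mul continuous_id).tendsto 0
        simpa using h3.mono_left nhdsWithin_le_nhds
    have L3 : Tendsto (fun h : ℝ => h⁻¹ • ∫ s in Ioc (0:ℝ) h, g s) (𝓝[>] 0) (𝓝 x) := by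
      rw [Metric.tendsto_nhdsWithin_nhds]
      intro ε hε
      have hcw : ContinuousWithinAt g (Ici 0) 0 := hgcont 0 (by simp)
      rw [Metric.continuousWithinAt_iff] at hcw
      obtain ⟨δ, hδ, hcd⟩ := hcw (ε/2) (by linarith)
      refine ⟨δ, hδ, ?_⟩
      intro h hh hhd
      have hh' : 0 < h := hh
      have hd : dist (h⁻¹ • ∫ s in Ioc (0:ℝ) h, g s) x
          = ‖h⁻¹ • ∫ s in Ioc (0:ℝ) h, (g s - x)‖ := by
        rw [dist_eq_norm]
        congr 1
        have hxint : IntegrableOn (fun _ : ℝ => x) (Ioc (0:ℝ) h) := by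
          exact integrableOn_const (by rw [Real.volume_Ioc]; exact ENNReal.ofReal_ne_top)
        rw [integral_sub ((hgint 0 le_rfl).mono_set Set.Ioc_subset_Ioi_self) hxint,
          setIntegral_const, smul_sub, Real.volume_real_Ioc_of_le hh'.le,
          sub_zero, smul_smul,
          inv_mul_cancel₀ (ne_of_gt hh'), one_smul]
      rw [hd]
      have hb : ∀ s ∈ Ioc (0:ℝ) h, ‖g s - x‖ ≤ ε/2 := by
        intro s hs
        have h5 := hcd (x := s) (by simp; exact hs.1.le)
          (by rw [Real.dist_eq, sub_zero, abs_of_pos hs.1]; exact lt_of_le_of_lt hs.2 (by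
            rwa [Real.dist_eq, sub_zero, abs_of_pos hh'] at hhd))
        rw [hg0] at h5
        rw [← dist_eq_norm]
        exact h5.le
      have hnb := norm_setIntegral_le_of_norm_le_const (μ := volume) (s := Ioc (0:ℝ) h)
        (by rw [Real.volume_Ioc]; exact ENNReal.ofReal_lt_top) hb
      rw [Real.volume_real_Ioc_of_le hh'.le, sub_zero] at hnb
      rw [norm_smul, Real.norm_eq_abs, abs_of_pos (inv_pos.2 hh')]
      calc h⁻¹ * ‖∫ s in Ioc (0:ℝ) h, (g s - x)‖ ≤ h⁻¹ * (ε/2 * h) :=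
        mul_le_mul_of_nonneg_left hnb (inv_pos.2 hh').le
      _ = ε/2 := by field_simp
      _ < ε := by linarith
    have tendstoQ : Tendsto (fun h : ℝ => h⁻¹ • (T h Q - Q)) (𝓝[>] 0)
        (𝓝 (lam • Q - x)) := by
      refine Tendsto.congr' ?_ ((L1.smul L2).sub L3)
      filter_upwards [self_mem_nhdsWithin] with h hh
      exact (hiden h hh).symm
    have hQmem : Q ∈ A.domain := (hAdom Q).2 ⟨lam • Q - x, tendstoQ⟩
    have hAQ : A ⟨Q, hQmem⟩ = lam • Q - x :=
      tendsto_nhds_unique (hAval ⟨Q, hQmem⟩) tendstoQ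
    have hRQ : R lam x = Q := by
      have h2 := hRleft lam hlam ⟨Q, hQmem⟩
      rw [hAQ] at h2
      rw [show ((⟨Q, hQmem⟩ : A.domain) : X) = Q from rfl] at h2
      rwa [Complex.coe_smul, sub_sub_cancel] at h2
    -- final estimate
    rw [hRQ, Complex.coe_smul, Complex.coe_smul]
    rw [norm_smul, Real.norm_eq_abs, abs_of_pos (Real.rpow_pos_of_pos hlam α)]
    have hwint : IntegrableOn (fun s : ℝ => lam * Real.exp (-(lam * s))) (Ioi 0) := by
      have := (exp_neg_integrableOn_Ioi 0 hlam).const_mul lam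
      simpa [neg_mul, IntegrableOn] using this
    have hwone : (∫ s in Ioi (0:ℝ), lam * Real.exp (-(lam * s))) = 1 := by
      rw [MeasureTheory.integral_const_mul]
      have h := integral_comp_mul_left_Ioi (fun u : ℝ => Real.exp (-u)) 0 hlam
      simp only [mul_zero] at h
      rw [h, integral_exp_neg_Ioi_zero]
      simp
      exact mul_inv_cancel₀ (ne_of_gt hlam)
    have hrep : lam • Q - x = ∫ s in Ioi (0:ℝ), (lam * Real.exp (-(lam * s))) • (T s x - x) := by
      have hQl : lam • Q = ∫ s in Ioi (0:ℝ), (lam * Real.exp (-(lam * s))) • T s x := by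
        rw [hQdef, ← integral_smul]
        apply setIntegral_congr_fun measurableSet_Ioi
        intro s _
        show lam • g s = (lam * Real.exp (-(lam * s))) • T s x
        rw [hgdef]
        simp only [smul_smul]
      have hxl : x = ∫ s in Ioi (0:ℝ), (lam * Real.exp (-(lam * s))) • x := by
        rw [integral_smul_const, hwone, one_smul]
      rw [hQl]
      nth_rewrite 2 [hxl]
      rw [← integral_sub]
      · apply setIntegral_congr_fun measurableSet_Ioi
        intro s _
        simp only [smul_sub]
      · have h6 := (hgint 0 le_rfl).smul lam
        refine h6.congr ?_
        apply ae_of_all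
        intro s
        show lam • g s = (lam * Real.exp (-(lam * s))) • T s x
        rw [hgdef]; simp only [smul_smul]
      · exact hwint.smul_const x
    rw [hrep]
    have hφint : IntegrableOn
        (fun s : ℝ => (lam * C) * (s ^ α * Real.exp (-(lam * s)))) (Ioi 0) := by
      have h7 := integrableOn_rpow_mul_exp_neg_mul_rpow (s := α) (p := 1) (b := lam)
        (by linarith) zero_lt_one hlam
      have h8 : IntegrableOn (fun s : ℝ => s ^ α * Real.exp (-(lam * s))) (Ioi 0) := by
        simpa [Real.rpow_one, neg_mul] using h7
      exact h8.const_mul (lam * C)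
    have hφval : (∫ s in Ioi (0:ℝ), (lam * C) * (s ^ α * Real.exp (-(lam * s))))
        = (lam * C) * (lam ^ (-(α + 1)) * Real.Gamma (α + 1)) := by
      rw [MeasureTheory.integral_const_mul]
      congr 1
      have h9 := integral_rpow_mul_exp_neg_mul_rpow (p := 1) (q := α) (b := lam)
        one_pos (by linarith) hlam
      simp only [Real.rpow_one] at h9
      rw [show (fun s : ℝ => s ^ α * Real.exp (-(lam * s)))
          = fun s : ℝ => s ^ α * Real.exp (-lam * s) by funext s; rw [neg_mul]]
      rw [h9]
      ring_nf
    have hbound : ‖∫ s in Ioi (0:ℝ), (lam * Real.exp (-(lam * s))) • (T s x - x)‖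
        ≤ ∫ s in Ioi (0:ℝ), (lam * C) * (s ^ α * Real.exp (-(lam * s))) := by
      apply norm_integral_le_of_norm_le hφint
      rw [ae_restrict_iff' measurableSet_Ioi]
      apply ae_of_all
      intro s hs
      have hs' : 0 < s := hs
      rw [norm_smul, Real.norm_eq_abs,
        abs_of_pos (mul_pos hlam (Real.exp_pos _))]
      calc lam * Real.exp (-(lam * s)) * ‖T s x - x‖
          ≤ lam * Real.exp (-(lam * s)) * (C * s ^ α) := by
            apply mul_le_mul_of_nonneg_left (hC s hs')
            exact (mul_pos hlam (Real.exp_pos _)).le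
        _ = (lam * C) * (s ^ α * Real.exp (-(lam * s))) := by ring
    calc lam ^ α * ‖∫ s in Ioi (0:ℝ), (lam * Real.exp (-(lam * s))) • (T s x - x)‖
        ≤ lam ^ α * ((lam * C) * (lam ^ (-(α + 1)) * Real.Gamma (α + 1))) := by
          apply mul_le_mul_of_nonneg_left _ (Real.rpow_pos_of_pos hlam α).le
          rw [← hφval]; exact hbound
      _ = (lam ^ α * lam ^ (1:ℝ) * lam ^ (-(α + 1))) * (C * Real.Gamma (α + 1)) := by
          rw [Real.rpow_one]; ring
      _ = C * Real.Gamma (α + 1) := by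
          rw [← Real.rpow_add hlam, ← Real.rpow_add hlam,
            show α + 1 + -(α + 1) = 0 by ring, Real.rpow_zero, one_mul]
  refine ⟨⟨fwd, ?_⟩, quant⟩
  rintro ⟨M, hM⟩
  exact ⟨zetaC α * M, fun t ht => quant M hM t ht⟩

end
end

section
/- Let A₀ and A = A₀ + B be generators of contraction semigroups on a Banach space X, let α ∈ (0,1], and let B be relatively A₀-bounded with A₀-bound a ≥ 0 and bound b ≥ 0 (i.e. D(A₀) ⊆ D(B) and ‖Bx‖ ≤ a‖A₀x‖ + b‖x‖ on D(A₀)). If x ∈ X satisfies sup_{λ>0} ‖λ^α A₀(λI − A₀)^{-1} x‖ ≤ k for some k ≥ 0, then for every c > 0: sup_{λ>0} ‖λ^α A(λI − A)^{-1} x‖ ≤ max{2c^α ‖x‖, 3bc^{α−1}‖x‖ + (1+3a)k} < ∞. In particular the Favard space F_α of the semigroup generated by A₀ is contained in the Favard space F_α of the semigroup generated by A. -/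
open Filter Topology

noncomputable section


lemma aux_real_smul {X : Type*} [NormedAddCommGroup X] [NormedSpace ℂ X] (r : ℝ) (z : X) :
    r • z = ((r:ℂ)) • z := by
  rw [← one_smul ℂ z, ← smul_assoc, Complex.real_smul, mul_one, one_smul]

/-- dissipativity of the generator of a contraction semigroup -/
lemma aux_dissip {X : Type*} [NormedAddCommGroup X] [NormedSpace ℂ X]
    (T : ℝ → X →L[ℂ] X)
    (hTcontr : ∀ t : ℝ, 0 ≤ t → ∀ x : X, ‖T t x‖ ≤ ‖x‖)
    (A : X →ₗ.[ℂ] X)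
    (hAval : ∀ x : A.domain,
      Tendsto (fun t : ℝ => t⁻¹ • (T t (x : X) - (x : X))) (𝓝[>] 0) (𝓝 (A x)))
    (lam : ℝ) (hlam : 0 < lam) (y : A.domain) :
    lam * ‖(y : X)‖ ≤ ‖(lam : ℂ) • (y : X) - A y‖ := by
  have h1 : Tendsto (fun t : ℝ => ‖(lam : ℂ) • (y : X) - t⁻¹ • (T t (y:X) - (y:X))‖)
      (𝓝[>] 0) (𝓝 ‖(lam : ℂ) • (y : X) - A y‖) :=
    (tendsto_const_nhds.sub (hAval y)).norm
  refine ge_of_tendsto h1 ?_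
  filter_upwards [self_mem_nhdsWithin] with t ht
  have ht' : (0:ℝ) < t := ht
  have key : (lam : ℂ) • (y : X) - t⁻¹ • (T t (y:X) - (y:X))
      = ((lam + t⁻¹ : ℝ) : ℂ) • (y : X) - ((t⁻¹ : ℝ) : ℂ) • T t (y:X) := by
    rw [aux_real_smul]
    push_cast
    rw [add_smul]
    rw [smul_sub]
    abel
  rw [key]
  have h2 : ‖((lam + t⁻¹ : ℝ) : ℂ) • (y : X)‖ - ‖((t⁻¹ : ℝ) : ℂ) • T t (y:X)‖
      ≤ ‖((lam + t⁻¹ : ℝ) : ℂ) • (y : X) - ((t⁻¹ : ℝ) : ℂ) • T t (y:X)‖ :=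
    norm_sub_norm_le _ _
  have h3 : ‖((lam + t⁻¹ : ℝ) : ℂ) • (y : X)‖ = (lam + t⁻¹) * ‖(y:X)‖ := by
    rw [norm_smul, Complex.norm_real, Real.norm_of_nonneg (by positivity)]
  have h4 : ‖((t⁻¹ : ℝ) : ℂ) • T t (y:X)‖ ≤ t⁻¹ * ‖(y:X)‖ := by
    rw [norm_smul, Complex.norm_real, Real.norm_of_nonneg (by positivity)]
    exact mul_le_mul_of_nonneg_left (hTcontr t ht'.le _) (by positivity)
  nlinarith [norm_nonneg (y : X)]

/-- growth estimate `‖T_t y - y‖ ≤ t ‖A y‖` for `y` in the domain -/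
lemma aux_growth {X : Type*} [NormedAddCommGroup X] [NormedSpace ℂ X]
    (T : ℝ → X →L[ℂ] X)
    (hT0 : T 0 = ContinuousLinearMap.id ℂ X)
    (hTadd : ∀ t s : ℝ, 0 ≤ t → 0 ≤ s → (T t).comp (T s) = T (t + s))
    (hTcontr : ∀ t : ℝ, 0 ≤ t → ∀ x : X, ‖T t x‖ ≤ ‖x‖)
    (A : X →ₗ.[ℂ] X)
    (hAval : ∀ x : A.domain,
      Tendsto (fun t : ℝ => t⁻¹ • (T t (x : X) - (x : X))) (𝓝[>] 0) (𝓝 (A x)))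
    (y : A.domain) (t : ℝ) (ht : 0 < t) :
    ‖T t (y : X) - (y : X)‖ ≤ t * ‖A y‖ := by
  have step : ∀ n : ℕ, ∀ s : ℝ, 0 ≤ s →
      ‖T (n * s) (y:X) - (y:X)‖ ≤ n * ‖T s (y:X) - (y:X)‖ := by
    intro n
    induction n with
    | zero => intro s hs; simp [hT0]
    | succ n ih =>
      intro s hs
      have h1 : ((n+1 : ℕ) : ℝ) * s = n * s + s := by push_cast; ring
      have h2 : T ((n:ℝ) * s + s) (y:X) = T ((n:ℝ)*s) (T s (y:X)) := by
        rw [← hTadd ((n:ℝ)*s) s (by positivity) hs]; rfl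
      calc ‖T (((n:ℕ)+1 : ℕ) * s : ℝ) (y:X) - (y:X)‖
          = ‖T ((n:ℝ)*s) (T s (y:X)) - (y:X)‖ := by rw [show (((n:ℕ)+1:ℕ):ℝ) * s = (n:ℝ)*s + s by push_cast; ring, h2]
        _ = ‖T ((n:ℝ)*s) (T s (y:X) - (y:X)) + (T ((n:ℝ)*s) (y:X) - (y:X))‖ := by rw [map_sub]; ring_nf; abel_nf
        _ ≤ ‖T ((n:ℝ)*s) (T s (y:X) - (y:X))‖ + ‖T ((n:ℝ)*s) (y:X) - (y:X)‖ := norm_add_le _ _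
        _ ≤ ‖T s (y:X) - (y:X)‖ + (n:ℝ) * ‖T s (y:X) - (y:X)‖ := add_le_add (hTcontr _ (by positivity) _) (ih s hs)
        _ = ((n:ℕ)+1 : ℕ) * ‖T s (y:X) - (y:X)‖ := by push_cast; ring
  have hseq : Tendsto (fun n : ℕ => t / n) atTop (𝓝[>] (0:ℝ)) := by
    refine tendsto_nhdsWithin_of_tendsto_nhds_of_eventually_within _
      (tendsto_const_div_atTop_nhds_zero_nat t) ?_
    filter_upwards [eventually_ge_atTop 1] with n hn
    have : (0:ℝ) < n := by exact_mod_cast hn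
    exact div_pos ht this
  have hlim : Tendsto (fun n : ℕ => t * ‖(t/(n:ℝ))⁻¹ • (T (t/(n:ℝ)) (y:X) - (y:X))‖) atTop
      (𝓝 (t * ‖A y‖)) := (((hAval y).comp hseq).norm).const_mul t
  refine ge_of_tendsto hlim ?_
  filter_upwards [eventually_ge_atTop 1] with n hn
  have hn' : (0:ℝ) < n := by exact_mod_cast hn
  have hs : (0:ℝ) < t / n := div_pos ht hn'
  have e1 : ‖(t/(n:ℝ))⁻¹ • (T (t/(n:ℝ)) (y:X) - (y:X))‖ = (t/n)⁻¹ * ‖T (t/(n:ℝ)) (y:X) - (y:X)‖ := by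
    rw [norm_smul, Real.norm_of_nonneg (by positivity)]
  rw [e1]
  have e2 : t * ((t/n)⁻¹ * ‖T (t/(n:ℝ)) (y:X) - (y:X)‖) = n * ‖T (t/(n:ℝ)) (y:X) - (y:X)‖ := by
    field_simp
  rw [e2]
  have := step n (t/n) hs.le
  rwa [show (n:ℝ) * (t/n) = t by field_simp] at this

/-- Perturbation of Favard spaces.  Let `A₀` and `A = A₀ + B` be
generators of contraction semigroups `(T₀ₜ)`, `(Tₜ)` on a Banach space `X`, with resolvents
`R₀ λ = (λI − A₀)^{-1}`, `R λ = (λI − A)^{-1}` for `λ > 0`, and let `B` be relatively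
`A₀`-bounded with `A₀`-bound `a` and bound `b`.  Using
`A(λI − A)^{-1}x = λ R_λ x − x`, if `sup_{λ>0} ‖λ^α A₀(λI − A₀)^{-1}x‖ ≤ k` then for every
`c > 0`: `sup_{λ>0} ‖λ^α A(λI − A)^{-1}x‖ ≤ max{2c^α‖x‖, 3bc^{α−1}‖x‖ + (1+3a)k}`.
In particular the Favard space `F_α` of the semigroup generated by `A₀` is contained in the
Favard space `F_α` of the semigroup generated by `A`. -/
theorem statement12
    {X : Type*} [NormedAddCommGroup X] [NormedSpace ℂ X] [CompleteSpace X]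
    -- the two contraction semigroups
    (T₀ T : ℝ → X →L[ℂ] X)
    (hT₀0 : T₀ 0 = ContinuousLinearMap.id ℂ X)
    (hT₀add : ∀ t s : ℝ, 0 ≤ t → 0 ≤ s → (T₀ t).comp (T₀ s) = T₀ (t + s))
    (hT₀contr : ∀ t : ℝ, 0 ≤ t → ∀ x : X, ‖T₀ t x‖ ≤ ‖x‖)
    (hT₀cont : ∀ x : X, ContinuousOn (fun t : ℝ => T₀ t x) (Set.Ici 0))
    (hT0 : T 0 = ContinuousLinearMap.id ℂ X)
    (hTadd : ∀ t s : ℝ, 0 ≤ t → 0 ≤ s → (T t).comp (T s) = T (t + s))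
    (hTcontr : ∀ t : ℝ, 0 ≤ t → ∀ x : X, ‖T t x‖ ≤ ‖x‖)
    (hTcont : ∀ x : X, ContinuousOn (fun t : ℝ => T t x) (Set.Ici 0))
    -- their generators
    (A₀ A : X →ₗ.[ℂ] X)
    (hA₀dom : ∀ x : X, x ∈ A₀.domain ↔
      ∃ y : X, Tendsto (fun t : ℝ => t⁻¹ • (T₀ t x - x)) (𝓝[>] 0) (𝓝 y))
    (hA₀val : ∀ x : A₀.domain,
      Tendsto (fun t : ℝ => t⁻¹ • (T₀ t (x : X) - (x : X))) (𝓝[>] 0) (𝓝 (A₀ x)))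
    (hAdom : ∀ x : X, x ∈ A.domain ↔
      ∃ y : X, Tendsto (fun t : ℝ => t⁻¹ • (T t x - x)) (𝓝[>] 0) (𝓝 y))
    (hAval : ∀ x : A.domain,
      Tendsto (fun t : ℝ => t⁻¹ • (T t (x : X) - (x : X))) (𝓝[>] 0) (𝓝 (A x)))
    -- A = A₀ + B with B relatively A₀-bounded, A₀-bound a and bound b
    (B : X →ₗ.[ℂ] X) (hBdom : A₀.domain ≤ B.domain)
    (hAeq : A.domain = A₀.domain)
    (hAsum : ∀ (x : X) (hx : x ∈ A₀.domain) (hx' : x ∈ A.domain),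
      A ⟨x, hx'⟩ = A₀ ⟨x, hx⟩ + B ⟨x, hBdom hx⟩)
    (a b : ℝ) (ha : 0 ≤ a) (hb : 0 ≤ b)
    (hrel : ∀ x : A₀.domain, ‖B ⟨(x : X), hBdom x.2⟩‖ ≤ a * ‖A₀ x‖ + b * ‖(x : X)‖)
    -- the resolvents of A₀ and of A, for λ > 0
    (R₀ R : ℝ → X →L[ℂ] X)
    (hR₀res : ∀ lam : ℝ, 0 < lam → ∀ x : X,
      ∃ hmem : R₀ lam x ∈ A₀.domain, (lam : ℂ) • R₀ lam x - A₀ ⟨R₀ lam x, hmem⟩ = x)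
    (hR₀left : ∀ lam : ℝ, 0 < lam → ∀ x : A₀.domain,
      R₀ lam ((lam : ℂ) • (x : X) - A₀ x) = (x : X))
    (hRres : ∀ lam : ℝ, 0 < lam → ∀ x : X,
      ∃ hmem : R lam x ∈ A.domain, (lam : ℂ) • R lam x - A ⟨R lam x, hmem⟩ = x)
    (hRleft : ∀ lam : ℝ, 0 < lam → ∀ x : A.domain,
      R lam ((lam : ℂ) • (x : X) - A x) = (x : X))
    (α : ℝ) (hα : α ∈ Set.Ioc (0 : ℝ) 1)
    (x : X) (k : ℝ) (hk : 0 ≤ k)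
    (hbound : ∀ lam : ℝ, 0 < lam →
      ‖((lam ^ α : ℝ) : ℂ) • ((lam : ℂ) • R₀ lam x - x)‖ ≤ k) :
    (∀ c : ℝ, 0 < c → ∀ lam : ℝ, 0 < lam →
      ‖((lam ^ α : ℝ) : ℂ) • ((lam : ℂ) • R lam x - x)‖
        ≤ max (2 * c ^ α * ‖x‖) (3 * b * c ^ (α - 1) * ‖x‖ + (1 + 3 * a) * k)) ∧
    ((∃ C : ℝ, ∀ t : ℝ, 0 < t → ‖T₀ t x - x‖ ≤ C * t ^ α) →
      (∃ C : ℝ, ∀ t : ℝ, 0 < t → ‖T t x - x‖ ≤ C * t ^ α)) := by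

  -- norm of a real scalar acting on X
  have nsmul : ∀ (r : ℝ), 0 ≤ r → ∀ v : X, ‖((r : ℝ) : ℂ) • v‖ = r * ‖v‖ := by
    intro r hr v
    rw [norm_smul, Complex.norm_real, Real.norm_of_nonneg hr]
  -- contractivity of the resolvents
  have hRc : ∀ lam : ℝ, 0 < lam → ∀ z : X, lam * ‖R lam z‖ ≤ ‖z‖ := by
    intro lam hl z
    obtain ⟨hm, he⟩ := hRres lam hl z
    have h := aux_dissip T hTcontr A hAval lam hl ⟨R lam z, hm⟩
    calc lam * ‖R lam z‖ ≤ ‖(lam : ℂ) • R lam z - A ⟨R lam z, hm⟩‖ := h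
      _ = ‖z‖ := by rw [he]
  have hR₀c : ∀ lam : ℝ, 0 < lam → ∀ z : X, lam * ‖R₀ lam z‖ ≤ ‖z‖ := by
    intro lam hl z
    obtain ⟨hm, he⟩ := hR₀res lam hl z
    have h := aux_dissip T₀ hT₀contr A₀ hA₀val lam hl ⟨R₀ lam z, hm⟩
    calc lam * ‖R₀ lam z‖ ≤ ‖(lam : ℂ) • R₀ lam z - A₀ ⟨R₀ lam z, hm⟩‖ := h
      _ = ‖z‖ := by rw [he]
  -- Part 1
  have part1 : ∀ c : ℝ, 0 < c → ∀ lam : ℝ, 0 < lam →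
      ‖((lam ^ α : ℝ) : ℂ) • ((lam : ℂ) • R lam x - x)‖
        ≤ max (2 * c ^ α * ‖x‖) (3 * b * c ^ (α - 1) * ‖x‖ + (1 + 3 * a) * k) := by
    intro c hc lam hl
    have hla : (0:ℝ) < lam ^ α := Real.rpow_pos_of_pos hl α
    rw [nsmul _ hla.le]
    rcases le_or_gt lam c with hcase | hcase
    · -- small lam : use contractivity only
      have h1 : ‖(lam : ℂ) • R lam x - x‖ ≤ 2 * ‖x‖ := by
        have h2 : ‖(lam : ℂ) • R lam x‖ = lam * ‖R lam x‖ := nsmul _ hl.le _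
        have h3 := hRc lam hl x
        calc ‖(lam : ℂ) • R lam x - x‖ ≤ ‖(lam : ℂ) • R lam x‖ + ‖x‖ := norm_sub_le _ _
          _ ≤ 2 * ‖x‖ := by rw [h2]; linarith
      have h4 : lam ^ α ≤ c ^ α := Real.rpow_le_rpow hl.le hcase hα.1.le
      refine le_trans ?_ (le_max_left _ _)
      calc lam ^ α * ‖(lam : ℂ) • R lam x - x‖ ≤ c ^ α * (2 * ‖x‖) :=
            mul_le_mul h4 h1 (norm_nonneg _) (by positivity)
        _ = 2 * c ^ α * ‖x‖ := by ring
    · -- large lam : use the perturbation identity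
      obtain ⟨hm0, he0⟩ := hR₀res lam hl x
      set w := R₀ lam x with hwdef
      have hA0w : A₀ ⟨w, hm0⟩ = (lam : ℂ) • w - x := by rw [← he0]; abel
      have hmA : w ∈ A.domain := by rw [hAeq]; exact hm0
      set p := B ⟨w, hBdom hm0⟩ with hpdef
      have key : (lam : ℂ) • w - A ⟨w, hmA⟩ = x - p := by
        rw [hAsum w hm0 hmA, hA0w]; abel
      have hwR : R lam (x - p) = w := by
        have h := hRleft lam hl ⟨w, hmA⟩
        rw [show ((lam : ℂ) • ((⟨w, hmA⟩ : A.domain) : X) - A ⟨w, hmA⟩) = x - p from key] at h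
        exact h
      have hdecomp : (lam : ℂ) • R lam x - x = ((lam : ℂ) • w - x) + (lam : ℂ) • R lam p := by
        have h1 : R lam x - R lam p = w := by rw [← hwR, map_sub]
        have h2 : R lam x = w + R lam p := by rw [← h1]; abel
        rw [h2, smul_add]; abel
      have hb1 : lam ^ α * ‖(lam : ℂ) • w - x‖ ≤ k := by
        have h := hbound lam hl
        rwa [nsmul _ hla.le] at h
      have hp1 : ‖p‖ ≤ a * ‖(lam : ℂ) • w - x‖ + b * ‖w‖ := by
        have h := hrel ⟨w, hm0⟩
        rwa [hA0w] at h
      have hx1 : lam * ‖w‖ ≤ ‖x‖ := hR₀c lam hl x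
      have hx2 : lam * ‖R lam p‖ ≤ ‖p‖ := hRc lam hl p
      have hrp : ‖(lam : ℂ) • R lam p‖ = lam * ‖R lam p‖ := nsmul _ hl.le _
      have hle : lam ^ α * ‖(lam : ℂ) • R lam x - x‖
          ≤ k + (a * k + b * (lam ^ (α - 1)) * ‖x‖) := by
        have step1 : ‖(lam : ℂ) • R lam x - x‖ ≤ ‖(lam : ℂ) • w - x‖ + lam * ‖R lam p‖ := by
          rw [hdecomp]
          calc ‖((lam : ℂ) • w - x) + (lam : ℂ) • R lam p‖
              ≤ ‖(lam : ℂ) • w - x‖ + ‖(lam : ℂ) • R lam p‖ := norm_add_le _ _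
            _ = ‖(lam : ℂ) • w - x‖ + lam * ‖R lam p‖ := by rw [hrp]
        have step2 : lam ^ α * ‖(lam : ℂ) • R lam x - x‖
            ≤ lam ^ α * ‖(lam : ℂ) • w - x‖ + lam ^ α * ‖p‖ := by
          have := mul_le_mul_of_nonneg_left step1 hla.le
          have h4 := mul_le_mul_of_nonneg_left hx2 hla.le
          nlinarith
        have step3 : lam ^ α * ‖p‖ ≤ a * k + b * (lam ^ (α - 1)) * ‖x‖ := by
          have h5 : lam ^ α * ‖p‖ ≤ a * (lam ^ α * ‖(lam : ℂ) • w - x‖) + b * (lam ^ α * ‖w‖) := by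
            have := mul_le_mul_of_nonneg_left hp1 hla.le
            nlinarith
          have h6 : lam ^ α * ‖w‖ ≤ lam ^ (α - 1) * ‖x‖ := by
            have h7 : lam ^ (α - 1) = lam ^ α / lam := by
              rw [Real.rpow_sub hl, Real.rpow_one]
            rw [h7]
            rw [div_mul_eq_mul_div, le_div_iff₀ hl]
            calc lam ^ α * ‖w‖ * lam = lam ^ α * (lam * ‖w‖) := by ring
              _ ≤ lam ^ α * ‖x‖ := mul_le_mul_of_nonneg_left hx1 hla.le
          nlinarith [mul_le_mul_of_nonneg_left hb1 ha, mul_le_mul_of_nonneg_left h6 hb]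
        linarith
      refine le_trans hle (le_trans ?_ (le_max_right _ _))
      have h8 : lam ^ (α - 1) ≤ c ^ (α - 1) :=
        Real.rpow_le_rpow_of_nonpos hc hcase.le (by linarith [hα.2])
      have h9 : (0:ℝ) ≤ c ^ (α - 1) := (Real.rpow_pos_of_pos hc _).le
      have h10 : b * lam ^ (α - 1) * ‖x‖ ≤ b * c ^ (α - 1) * ‖x‖ :=
        mul_le_mul_of_nonneg_right (mul_le_mul_of_nonneg_left h8 hb) (norm_nonneg x)
      have h11 : 0 ≤ a * k := mul_nonneg ha hk
      have h12 : 0 ≤ b * c ^ (α - 1) * ‖x‖ := by positivity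
      linarith
  refine ⟨part1, fun _ => ?_⟩
  -- Part 2
  set M := max (2 * (1:ℝ) ^ α * ‖x‖) (3 * b * (1:ℝ) ^ (α - 1) * ‖x‖ + (1 + 3 * a) * k) with hMdef
  have hM0 : (0:ℝ) ≤ M := le_trans (by positivity) (le_max_left _ _)
  refine ⟨3 * M, fun t ht => ?_⟩
  have hl : 0 < t⁻¹ := inv_pos.2 ht
  have hta : (0:ℝ) < t ^ α := Real.rpow_pos_of_pos ht α
  have h1 : t⁻¹ ^ α * ‖((t⁻¹ : ℝ) : ℂ) • R t⁻¹ x - x‖ ≤ M := by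
    have h := part1 1 one_pos t⁻¹ hl
    rwa [nsmul _ (Real.rpow_pos_of_pos hl α).le] at h
  have hlaeq : t⁻¹ ^ α = (t ^ α)⁻¹ := Real.inv_rpow ht.le α
  have h2 : ‖((t⁻¹ : ℝ) : ℂ) • R t⁻¹ x - x‖ ≤ M * t ^ α := by
    rw [hlaeq, inv_mul_le_iff₀ hta, mul_comm (t ^ α) M] at h1
    exact h1
  obtain ⟨hm, he⟩ := hRres t⁻¹ hl x
  have hAR : A ⟨R t⁻¹ x, hm⟩ = ((t⁻¹ : ℝ) : ℂ) • R t⁻¹ x - x := by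
    calc A ⟨R t⁻¹ x, hm⟩
        = ((t⁻¹ : ℝ) : ℂ) • R t⁻¹ x - (((t⁻¹ : ℝ) : ℂ) • R t⁻¹ x - A ⟨R t⁻¹ x, hm⟩) :=
          (sub_sub_cancel _ _).symm
      _ = ((t⁻¹ : ℝ) : ℂ) • R t⁻¹ x - x := by rw [he]
  have hy : ((t⁻¹ : ℝ) : ℂ) • R t⁻¹ x ∈ A.domain := A.domain.smul_mem _ hm
  have hAy : A ⟨((t⁻¹ : ℝ) : ℂ) • R t⁻¹ x, hy⟩
      = ((t⁻¹ : ℝ) : ℂ) • (((t⁻¹ : ℝ) : ℂ) • R t⁻¹ x - x) := by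
    have h3 := A.map_smul ((t⁻¹ : ℝ) : ℂ) ⟨R t⁻¹ x, hm⟩
    rw [hAR] at h3
    exact h3
  have hnAy : t * ‖A ⟨((t⁻¹ : ℝ) : ℂ) • R t⁻¹ x, hy⟩‖ = ‖((t⁻¹ : ℝ) : ℂ) • R t⁻¹ x - x‖ := by
    rw [hAy, nsmul _ hl.le]
    rw [← mul_assoc, mul_inv_cancel₀ ht.ne', one_mul]
  have hgrow : ‖T t (((t⁻¹ : ℝ) : ℂ) • R t⁻¹ x) - ((t⁻¹ : ℝ) : ℂ) • R t⁻¹ x‖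
      ≤ t * ‖A ⟨((t⁻¹ : ℝ) : ℂ) • R t⁻¹ x, hy⟩‖ :=
    aux_growth T hT0 hTadd hTcontr A hAval ⟨((t⁻¹ : ℝ) : ℂ) • R t⁻¹ x, hy⟩ t ht
  have hxy : ‖x - ((t⁻¹ : ℝ) : ℂ) • R t⁻¹ x‖ ≤ M * t ^ α := by
    rw [← norm_neg, neg_sub]
    exact h2
  calc ‖T t x - x‖
      = ‖(T t (x - ((t⁻¹ : ℝ) : ℂ) • R t⁻¹ x) - (x - ((t⁻¹ : ℝ) : ℂ) • R t⁻¹ x))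
          + (T t (((t⁻¹ : ℝ) : ℂ) • R t⁻¹ x) - ((t⁻¹ : ℝ) : ℂ) • R t⁻¹ x)‖ := by
        rw [map_sub]; abel_nf
    _ ≤ ‖T t (x - ((t⁻¹ : ℝ) : ℂ) • R t⁻¹ x) - (x - ((t⁻¹ : ℝ) : ℂ) • R t⁻¹ x)‖
          + ‖T t (((t⁻¹ : ℝ) : ℂ) • R t⁻¹ x) - ((t⁻¹ : ℝ) : ℂ) • R t⁻¹ x‖ := norm_add_le _ _
    _ ≤ (‖T t (x - ((t⁻¹ : ℝ) : ℂ) • R t⁻¹ x)‖ + ‖x - ((t⁻¹ : ℝ) : ℂ) • R t⁻¹ x‖)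
          + t * ‖A ⟨((t⁻¹ : ℝ) : ℂ) • R t⁻¹ x, hy⟩‖ :=
        add_le_add (norm_sub_le _ _) hgrow
    _ ≤ (‖x - ((t⁻¹ : ℝ) : ℂ) • R t⁻¹ x‖ + ‖x - ((t⁻¹ : ℝ) : ℂ) • R t⁻¹ x‖)
          + t * ‖A ⟨((t⁻¹ : ℝ) : ℂ) • R t⁻¹ x, hy⟩‖ := by
        gcongr
        exact hTcontr t ht.le _
    _ ≤ (M * t ^ α + M * t ^ α) + M * t ^ α := by
        rw [hnAy]
        exact add_le_add (add_le_add hxy hxy) h2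
    _ = 3 * M * t ^ α := by ring

end
end

section
/- Let ρ, σ be states (positive trace-one operators) on a separable complex Hilbert space and q > 1. Then the q-Tsallis entropy satisfies the global Lipschitz estimate |T_q(ρ) − T_q(σ)| ≤ (q/(q−1)) ‖ρ − σ‖_q ≤ (q/(q−1)) ‖ρ − σ‖₁. If in addition ‖ρ‖_q ≥ δ > 0 and ‖ρ − σ‖_q ≤ ε < δ, then the q-Rényi entropy satisfies the local Lipschitz estimate |S_q(ρ) − S_q(σ)| ≤ (q/((q−1)(δ−ε))) ‖ρ − σ‖_q ≤ (q/((q−1)(δ−ε))) ‖ρ − σ‖₁. -/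
open scoped ENNReal NNReal

noncomputable section

local notation "⟪" x ", " y "⟫" => @inner ℂ _ _ x y

variable {𝓗 : Type*} [NormedAddCommGroup 𝓗] [InnerProductSpace ℂ 𝓗]

/-- The Schatten `q`-norm `‖A‖_q ∈ [0,∞]` (for `q ≥ 1`) of a bounded operator, via its
variational characterization
`‖A‖_q = sup { (Σᵢ |⟪eᵢ, A fᵢ⟫|^q)^{1/q} : (eᵢ), (fᵢ) finite orthonormal families }`
(the generalized diagonals of `A` are weakly majorized by its singular values).
For `q = 1` this is the trace norm. -/
def schattenN (q : ℝ) (A : 𝓗 →L[ℂ] 𝓗) : ℝ≥0∞ :=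
  ⨆ (n : ℕ) (e : Fin n → 𝓗) (f : Fin n → 𝓗) (_ : Orthonormal ℂ e) (_ : Orthonormal ℂ f),
    (∑ i, ENNReal.ofReal (‖⟪e i, A (f i)⟫‖ ^ q)) ^ (1 / q)

/-- Trace of a positive operator. -/
def opTr (A : 𝓗 →L[ℂ] 𝓗) : ℝ≥0∞ :=
  ⨆ (n : ℕ) (e : Fin n → 𝓗) (_ : Orthonormal ℂ e),
    ENNReal.ofReal (∑ i, (⟪A (e i), e i⟫).re)

/-- Positivity of a bounded operator. -/
def IsPosOp (A : 𝓗 →L[ℂ] 𝓗) : Prop :=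
  (∀ x y : 𝓗, ⟪A x, y⟫ = ⟪x, A y⟫) ∧ ∀ x : 𝓗, 0 ≤ (⟪A x, x⟫).re

/-- A state: positive operator of unit trace. -/
def IsStateOp (A : 𝓗 →L[ℂ] 𝓗) : Prop := IsPosOp A ∧ opTr A = 1

/-- The `q`-Tsallis entropy `T_q(ρ) = (1 − ‖ρ‖_q^q)/(q−1)`. -/
def tsallis (q : ℝ) (ρ : 𝓗 →L[ℂ] 𝓗) : ℝ :=
  (1 - (schattenN q ρ).toReal ^ q) / (q - 1)

/-- The `q`-Rényi entropy `S_q(ρ) = (q/(q−1)) log ‖ρ‖_q`. -/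
def renyi (q : ℝ) (ρ : 𝓗 →L[ℂ] 𝓗) : ℝ :=
  q / (q - 1) * Real.log ((schattenN q ρ).toReal)

lemma aux_le_schattenN (q : ℝ) (A : 𝓗 →L[ℂ] 𝓗) {n : ℕ} {e f : Fin n → 𝓗}
    (he : Orthonormal ℂ e) (hf : Orthonormal ℂ f) :
    (∑ i, ENNReal.ofReal (‖⟪e i, A (f i)⟫‖ ^ q)) ^ (1 / q) ≤ schattenN q A :=
  le_iSup_of_le n (le_iSup_of_le e (le_iSup_of_le f (le_iSup_of_le he (le_iSup_of_le hf le_rfl))))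

lemma aux_schattenN_le {q : ℝ} {A : 𝓗 →L[ℂ] 𝓗} {C : ℝ≥0∞}
    (h : ∀ (n : ℕ) (e f : Fin n → 𝓗), Orthonormal ℂ e → Orthonormal ℂ f →
      (∑ i, ENNReal.ofReal (‖⟪e i, A (f i)⟫‖ ^ q)) ^ (1 / q) ≤ C) :
    schattenN q A ≤ C :=
  iSup_le fun n => iSup_le fun e => iSup_le fun f => iSup_le fun he => iSup_le fun hf =>
    h n e f he hf

lemma aux_le_opTr (A : 𝓗 →L[ℂ] 𝓗) {n : ℕ} {e : Fin n → 𝓗} (he : Orthonormal ℂ e) :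
    ENNReal.ofReal (∑ i, (⟪A (e i), e i⟫).re) ≤ opTr A :=
  le_iSup_of_le n (le_iSup_of_le e (le_iSup_of_le he le_rfl))

lemma aux_cs (A : 𝓗 →L[ℂ] 𝓗) (hA : IsPosOp A) (x y : 𝓗) :
    ‖⟪x, A y⟫‖ ^ (2:ℕ) ≤ (⟪A x, x⟫).re * (⟪A y, y⟫).re := by
  have hre : ∀ z : 𝓗, (⟪z, A z⟫).re = (⟪A z, z⟫).re := fun z => by
    rw [← inner_conj_symm (A z) z]; exact (Complex.conj_re _).symm
  let c : PreInnerProductSpace.Core ℂ 𝓗 :=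
  { inner := fun u v => ⟪u, A v⟫
    conj_inner_symm := fun u v => by
      rw [inner_conj_symm, hA.1]
    re_inner_nonneg := fun u => by simpa [hre u] using hA.2 u
    add_left := fun u v w => by simpa using inner_add_left u v (A w)
    smul_left := fun u v r => by simp [mul_comm] }
  have h := @InnerProductSpace.Core.inner_mul_inner_self_le ℂ 𝓗 _ _ _ c x y
  have hxy : @inner ℂ 𝓗 (InnerProductSpace.Core.toPreInner') x y = ⟪x, A y⟫ := rfl
  have hyx : ‖⟪y, A x⟫‖ = ‖⟪x, A y⟫‖ := by
    rw [← inner_conj_symm y (A x), hA.1, RCLike.norm_conj]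
  have hyx' : @inner ℂ 𝓗 (InnerProductSpace.Core.toPreInner') y x = ⟪y, A x⟫ := rfl
  have hxx : @inner ℂ 𝓗 (InnerProductSpace.Core.toPreInner') x x = ⟪x, A x⟫ := rfl
  have hyy : @inner ℂ 𝓗 (InnerProductSpace.Core.toPreInner') y y = ⟪y, A y⟫ := rfl
  rw [hxy, hyx', hxx, hyy, hyx] at h
  have hres : ∀ z w : 𝓗, RCLike.re (⟪z, A w⟫) = (⟪z, A w⟫).re := fun z w => rfl
  rw [hres, hres, hre x, hre y] at h
  calc ‖⟪x, A y⟫‖ ^ (2:ℕ) = ‖⟪x, A y⟫‖ * ‖⟪x, A y⟫‖ := sq _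
    _ ≤ (⟪A x, x⟫).re * (⟪A y, y⟫).re := h

lemma aux_lq_sum_le {ι : Type*} (s : Finset ι) {q : ℝ} (hq : 1 ≤ q) (x : ι → ℝ≥0∞) :
    (∑ i ∈ s, x i ^ q) ^ (1/q) ≤ ∑ i ∈ s, x i := by
  have hq0 : 0 < q := lt_of_lt_of_le zero_lt_one hq
  classical
  induction s using Finset.induction with
  | empty =>
    rw [Finset.sum_empty, Finset.sum_empty, ENNReal.zero_rpow_of_pos (one_div_pos.2 hq0)]
  | @insert a s ha ih =>
    rw [Finset.sum_insert ha, Finset.sum_insert ha]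
    have hb : ((∑ i ∈ s, x i ^ q) ^ (1/q)) ^ q = ∑ i ∈ s, x i ^ q := by
      rw [← ENNReal.rpow_mul, one_div, inv_mul_cancel₀ hq0.ne', ENNReal.rpow_one]
    calc (x a ^ q + ∑ i ∈ s, x i ^ q) ^ (1/q)
        = (x a ^ q + ((∑ i ∈ s, x i ^ q) ^ (1/q)) ^ q) ^ (1/q) := by rw [hb]
      _ ≤ x a + (∑ i ∈ s, x i ^ q) ^ (1/q) := ENNReal.rpow_add_rpow_le_add _ _ hq
      _ ≤ x a + ∑ i ∈ s, x i := add_le_add le_rfl ih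

lemma aux_schattenN_le_one {q : ℝ} (hq : 1 ≤ q) (A : 𝓗 →L[ℂ] 𝓗) :
    schattenN q A ≤ schattenN 1 A := by
  refine aux_schattenN_le fun n e f he hf => ?_
  have hq0 : (0:ℝ) ≤ q := by linarith
  calc (∑ i, ENNReal.ofReal (‖⟪e i, A (f i)⟫‖ ^ q)) ^ (1/q)
      = (∑ i, ENNReal.ofReal ‖⟪e i, A (f i)⟫‖ ^ q) ^ (1/q) := by
        simp_rw [ENNReal.ofReal_rpow_of_nonneg (norm_nonneg _) hq0]
    _ ≤ ∑ i, ENNReal.ofReal ‖⟪e i, A (f i)⟫‖ := aux_lq_sum_le _ hq _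
    _ = (∑ i, ENNReal.ofReal (‖⟪e i, A (f i)⟫‖ ^ (1:ℝ))) ^ (1/(1:ℝ)) := by
        simp [Real.rpow_one]
    _ ≤ schattenN 1 A := aux_le_schattenN 1 A he hf

lemma aux_schattenN_neg (q : ℝ) (A : 𝓗 →L[ℂ] 𝓗) : schattenN q (-A) = schattenN q A := by
  simp only [schattenN, ContinuousLinearMap.neg_apply, inner_neg_right, norm_neg]

lemma aux_schattenN_add_le {q : ℝ} (hq : 1 ≤ q) (A B : 𝓗 →L[ℂ] 𝓗) :
    schattenN q (A + B) ≤ schattenN q A + schattenN q B := by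
  refine aux_schattenN_le fun n e f he hf => ?_
  have hq0 : (0:ℝ) ≤ q := by linarith
  set u : Fin n → ℝ≥0∞ := fun i => ENNReal.ofReal ‖⟪e i, A (f i)⟫‖ with hu
  set v : Fin n → ℝ≥0∞ := fun i => ENNReal.ofReal ‖⟪e i, B (f i)⟫‖ with hv
  have step1 : ∀ i : Fin n,
      ENNReal.ofReal (‖⟪e i, (A + B) (f i)⟫‖ ^ q) ≤ (u i + v i) ^ q := by
    intro i
    rw [← ENNReal.ofReal_rpow_of_nonneg (norm_nonneg _) hq0]
    refine ENNReal.rpow_le_rpow ?_ hq0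
    have h2 : ⟪e i, (A + B) (f i)⟫ = ⟪e i, A (f i)⟫ + ⟪e i, B (f i)⟫ := by
      rw [ContinuousLinearMap.add_apply, inner_add_right]
    rw [h2]
    exact le_trans (ENNReal.ofReal_le_ofReal (norm_add_le _ _)) ENNReal.ofReal_add_le
  calc (∑ i, ENNReal.ofReal (‖⟪e i, (A + B) (f i)⟫‖ ^ q)) ^ (1/q)
      ≤ (∑ i, (u i + v i) ^ q) ^ (1/q) :=
        ENNReal.rpow_le_rpow (Finset.sum_le_sum fun i _ => step1 i) (by positivity)
    _ ≤ (∑ i, u i ^ q) ^ (1/q) + (∑ i, v i ^ q) ^ (1/q) := ENNReal.Lp_add_le _ _ _ hq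
    _ = (∑ i, ENNReal.ofReal (‖⟪e i, A (f i)⟫‖ ^ q)) ^ (1/q)
        + (∑ i, ENNReal.ofReal (‖⟪e i, B (f i)⟫‖ ^ q)) ^ (1/q) := by
        simp_rw [hu, hv, ENNReal.ofReal_rpow_of_nonneg (norm_nonneg _) hq0]
    _ ≤ schattenN q A + schattenN q B :=
        add_le_add (aux_le_schattenN q A he hf) (aux_le_schattenN q B he hf)

lemma aux_schattenN_one_le_opTr (A : 𝓗 →L[ℂ] 𝓗) (hA : IsPosOp A) :
    schattenN 1 A ≤ opTr A := by
  refine aux_schattenN_le fun n e f he hf => ?_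
  have key : ∀ i : Fin n, 2 * ‖⟪e i, A (f i)⟫‖ ≤ (⟪A (e i), e i⟫).re + (⟪A (f i), f i⟫).re := by
    intro i
    have h1 := aux_cs A hA (e i) (f i)
    have h2 := hA.2 (e i)
    have h3 := hA.2 (f i)
    have h5 : ‖⟪e i, A (f i)⟫‖ ≤ ((⟪A (e i), e i⟫).re + (⟪A (f i), f i⟫).re) / 2 := by
      calc ‖⟪e i, A (f i)⟫‖ = Real.sqrt (‖⟪e i, A (f i)⟫‖ ^ 2) :=
            (Real.sqrt_sq (norm_nonneg _)).symm
        _ ≤ Real.sqrt ((((⟪A (e i), e i⟫).re + (⟪A (f i), f i⟫).re) / 2) ^ 2) := by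
            refine Real.sqrt_le_sqrt ?_
            nlinarith [sq_nonneg ((⟪A (e i), e i⟫).re - (⟪A (f i), f i⟫).re)]
        _ = ((⟪A (e i), e i⟫).re + (⟪A (f i), f i⟫).re) / 2 :=
            Real.sqrt_sq (by positivity)
    linarith
  have h2 : (2:ℝ≥0∞) * ∑ i, ENNReal.ofReal (‖⟪e i, A (f i)⟫‖ ^ (1:ℝ))
      ≤ 2 * opTr A := by
    rw [Finset.mul_sum]
    calc ∑ i, 2 * ENNReal.ofReal (‖⟪e i, A (f i)⟫‖ ^ (1:ℝ))
        ≤ ∑ i, (ENNReal.ofReal ((⟪A (e i), e i⟫).re)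
            + ENNReal.ofReal ((⟪A (f i), f i⟫).re)) := by
          refine Finset.sum_le_sum fun i _ => ?_
          rw [Real.rpow_one, ← ENNReal.ofReal_ofNat, ← ENNReal.ofReal_mul (by norm_num)]
          exact le_trans (ENNReal.ofReal_le_ofReal (key i)) ENNReal.ofReal_add_le
      _ = (∑ i, ENNReal.ofReal ((⟪A (e i), e i⟫).re))
            + ∑ i, ENNReal.ofReal ((⟪A (f i), f i⟫).re) := Finset.sum_add_distrib
      _ ≤ opTr A + opTr A := by
          refine add_le_add ?_ ?_
          · rw [← ENNReal.ofReal_sum_of_nonneg (fun i _ => hA.2 (e i))]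
            exact aux_le_opTr A he
          · rw [← ENNReal.ofReal_sum_of_nonneg (fun i _ => hA.2 (f i))]
            exact aux_le_opTr A hf
      _ = 2 * opTr A := (two_mul _).symm
  have h3 := (ENNReal.mul_le_mul_iff_right (by norm_num) (by norm_num)).1 h2
  calc (∑ i, ENNReal.ofReal (‖⟪e i, A (f i)⟫‖ ^ (1:ℝ))) ^ (1/(1:ℝ))
      = ∑ i, ENNReal.ofReal (‖⟪e i, A (f i)⟫‖ ^ (1:ℝ)) := by norm_num
    _ ≤ opTr A := h3

lemma aux_rpow_lipschitz {q : ℝ} (hq : 1 < q) :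
    ∀ a b : ℝ, 0 ≤ a → a ≤ 1 → 0 ≤ b → b ≤ 1 → |a ^ q - b ^ q| ≤ q * |a - b| := by
  have hq0 : (0:ℝ) < q := by linarith
  have hmono : MonotoneOn (fun x : ℝ => q * x - x ^ q) (Set.Icc (0:ℝ) 1) := by
    have hderiv : ∀ x ∈ interior (Set.Icc (0:ℝ) 1),
        HasDerivAt (fun x : ℝ => q * x - x ^ q) (q * 1 - q * x ^ (q - 1)) x := by
      intro x hx
      rw [interior_Icc] at hx
      exact ((hasDerivAt_id x).const_mul q).sub
        (Real.hasDerivAt_rpow_const (Or.inl hx.1.ne'))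
    refine monotoneOn_of_deriv_nonneg (convex_Icc 0 1) ?_ ?_ ?_
    · refine ContinuousOn.sub (Continuous.continuousOn (by fun_prop)) ?_
      intro x _
      exact (Real.continuousAt_rpow_const x q (Or.inr hq0.le)).continuousWithinAt
    · exact fun x hx => (hderiv x hx).differentiableAt.differentiableWithinAt
    · intro x hx
      rw [(hderiv x hx).deriv]
      rw [interior_Icc] at hx
      have hle : x ^ (q - 1) ≤ 1 := Real.rpow_le_one hx.1.le hx.2.le (by linarith)
      nlinarith
  have key : ∀ a b : ℝ, 0 ≤ a → a ≤ b → b ≤ 1 → b ^ q - a ^ q ≤ q * (b - a) := by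
    intro a b ha hab hb1
    have := hmono (Set.mem_Icc.2 ⟨ha, hab.trans hb1⟩) (Set.mem_Icc.2 ⟨ha.trans hab, hb1⟩) hab
    simp only at this
    linarith
  intro a b ha0 ha1 hb0 hb1
  rcases le_total a b with h | h
  · have h1 := key a b ha0 h hb1
    have h2 : a ^ q ≤ b ^ q := Real.rpow_le_rpow ha0 h hq0.le
    rw [abs_of_nonpos (by linarith), abs_of_nonpos (by linarith)]
    linarith
  · have h1 := key b a hb0 h ha1
    have h2 : b ^ q ≤ a ^ q := Real.rpow_le_rpow hb0 h hq0.le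
    rw [abs_of_nonneg (by linarith), abs_of_nonneg (by linarith)]
    linarith

lemma aux_log_lipschitz {m : ℝ} (hm : 0 < m) :
    ∀ a b : ℝ, m ≤ a → m ≤ b → |Real.log a - Real.log b| ≤ |a - b| / m := by
  have key : ∀ a b : ℝ, m ≤ b → b ≤ a → Real.log a - Real.log b ≤ (a - b) / m := by
    intro a b hb hba
    have hb0 : 0 < b := hm.trans_le hb
    have ha0 : 0 < a := hb0.trans_le hba
    have h1 : Real.log a - Real.log b = Real.log (a / b) := (Real.log_div ha0.ne' hb0.ne').symm
    rw [h1]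
    have h2 : Real.log (a / b) ≤ a / b - 1 := Real.log_le_sub_one_of_pos (by positivity)
    have h3 : a / b - 1 = (a - b) / b := by field_simp
    have h4 : (a - b) / b ≤ (a - b) / m :=
      div_le_div_of_nonneg_left (by linarith) hm hb
    linarith
  intro a b ha hb
  rcases le_total b a with h | h
  · rw [abs_of_nonneg (sub_nonneg.2 (Real.log_le_log (hm.trans_le hb) h)),
        abs_of_nonneg (sub_nonneg.2 h)]
    exact key a b hb h
  · rw [abs_of_nonpos (sub_nonpos.2 (Real.log_le_log (hm.trans_le ha) h)),
        abs_of_nonpos (sub_nonpos.2 h)]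
    rw [neg_sub, neg_sub]
    exact key b a ha h

/-- Lipschitz continuity of Tsallis and Rényi entropies.  Let `ρ, σ` be
states on a separable complex Hilbert space, `q > 1`.  Then
`|T_q(ρ) − T_q(σ)| ≤ (q/(q−1)) ‖ρ−σ‖_q ≤ (q/(q−1)) ‖ρ−σ‖₁`; if moreover `‖ρ‖_q ≥ δ > 0`
and `‖ρ−σ‖_q ≤ ε < δ`, then
`|S_q(ρ) − S_q(σ)| ≤ (q/((q−1)(δ−ε))) ‖ρ−σ‖_q ≤ (q/((q−1)(δ−ε))) ‖ρ−σ‖₁`. -/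
theorem statement19
    {𝓗 : Type*} [NormedAddCommGroup 𝓗] [InnerProductSpace ℂ 𝓗] [CompleteSpace 𝓗]
    [TopologicalSpace.SeparableSpace 𝓗]
    (q : ℝ) (hq : 1 < q)
    (ρ σ : 𝓗 →L[ℂ] 𝓗) (hρ : IsStateOp ρ) (hσ : IsStateOp σ) :
    -- global Lipschitz estimate for the q-Tsallis entropy, and ‖ρ−σ‖_q ≤ ‖ρ−σ‖₁
    (|tsallis q ρ - tsallis q σ| ≤ q / (q - 1) * (schattenN q (ρ - σ)).toReal ∧
      schattenN q (ρ - σ) ≤ schattenN 1 (ρ - σ)) ∧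
    -- local Lipschitz estimate for the q-Rényi entropy
    (∀ δ ε : ℝ, 0 < δ → 0 ≤ ε → ε < δ →
      δ ≤ (schattenN q ρ).toReal →
      schattenN q (ρ - σ) ≤ ENNReal.ofReal ε →
      |renyi q ρ - renyi q σ| ≤ q / ((q - 1) * (δ - ε)) * (schattenN q (ρ - σ)).toReal) := by
  obtain ⟨hρpos, hρtr⟩ := hρ
  obtain ⟨hσpos, hσtr⟩ := hσ
  have hq1 : (0:ℝ) < q - 1 := by linarith
  have hq0 : (0:ℝ) < q := by linarith
  have hρ1 : schattenN q ρ ≤ 1 :=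
    (aux_schattenN_le_one hq.le ρ).trans ((aux_schattenN_one_le_opTr ρ hρpos).trans_eq hρtr)
  have hσ1 : schattenN q σ ≤ 1 :=
    (aux_schattenN_le_one hq.le σ).trans ((aux_schattenN_one_le_opTr σ hσpos).trans_eq hσtr)
  have hρT : schattenN q ρ ≠ ⊤ := ne_top_of_le_ne_top ENNReal.one_ne_top hρ1
  have hσT : schattenN q σ ≠ ⊤ := ne_top_of_le_ne_top ENNReal.one_ne_top hσ1
  have hdT : schattenN q (ρ - σ) ≠ ⊤ := by
    have h := aux_schattenN_add_le hq.le ρ (-σ)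
    rw [← sub_eq_add_neg, aux_schattenN_neg] at h
    exact ne_top_of_le_ne_top (ENNReal.add_ne_top.2 ⟨hρT, hσT⟩) h
  set A := (schattenN q ρ).toReal with hA
  set B := (schattenN q σ).toReal with hB
  set C := (schattenN q (ρ - σ)).toReal with hC
  have hA0 : 0 ≤ A := ENNReal.toReal_nonneg
  have hB0 : 0 ≤ B := ENNReal.toReal_nonneg
  have hC0 : 0 ≤ C := ENNReal.toReal_nonneg
  have hA1 : A ≤ 1 := by simpa using ENNReal.toReal_mono ENNReal.one_ne_top hρ1
  have hB1 : B ≤ 1 := by simpa using ENNReal.toReal_mono ENNReal.one_ne_top hσ1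
  have tri1 : A ≤ B + C := by
    have h := aux_schattenN_add_le hq.le σ (ρ - σ)
    rw [show σ + (ρ - σ) = ρ by abel] at h
    have h2 := ENNReal.toReal_mono (ENNReal.add_ne_top.2 ⟨hσT, hdT⟩) h
    rwa [ENNReal.toReal_add hσT hdT] at h2
  have tri2 : B ≤ A + C := by
    have h := aux_schattenN_add_le hq.le ρ (σ - ρ)
    rw [show ρ + (σ - ρ) = σ by abel, show σ - ρ = -(ρ - σ) by abel,
      aux_schattenN_neg] at h
    have h2 := ENNReal.toReal_mono (ENNReal.add_ne_top.2 ⟨hρT, hdT⟩) h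
    rwa [ENNReal.toReal_add hρT hdT] at h2
  have habs : |A - B| ≤ C := abs_sub_le_iff.2 ⟨by linarith, by linarith⟩
  refine ⟨⟨?_, aux_schattenN_le_one hq.le (ρ - σ)⟩, ?_⟩
  · have hts : tsallis q ρ - tsallis q σ = (B ^ q - A ^ q) / (q - 1) := by
      simp only [tsallis]
      rw [← hA, ← hB, div_sub_div_same]
      ring_nf
    rw [hts, abs_div, abs_of_pos hq1, div_le_iff₀ hq1]
    have h1 : |B ^ q - A ^ q| ≤ q * |B - A| := aux_rpow_lipschitz hq B A hB0 hB1 hA0 hA1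
    have h2 : |B - A| ≤ C := by rwa [abs_sub_comm] at habs
    calc |B ^ q - A ^ q| ≤ q * C := h1.trans (by nlinarith)
      _ = q / (q - 1) * C * (q - 1) := by field_simp
  · intro δ ε hδ hε hεδ hδA hεC
    have hCε : C ≤ ε := by
      have h := ENNReal.toReal_mono ENNReal.ofReal_ne_top hεC
      rwa [ENNReal.toReal_ofReal hε] at h
    have hm : 0 < δ - ε := by linarith
    have hAδ : δ - ε ≤ A := by linarith
    have hBδ : δ - ε ≤ B := by linarith
    have hlog : |Real.log A - Real.log B| ≤ |A - B| / (δ - ε) :=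
      aux_log_lipschitz hm A B hAδ hBδ
    have hr : renyi q ρ - renyi q σ = q / (q - 1) * (Real.log A - Real.log B) := by
      simp only [renyi]
      rw [← hA, ← hB]
      ring
    rw [hr, abs_mul, abs_of_pos (by positivity : (0:ℝ) < q / (q - 1))]
    calc q / (q - 1) * |Real.log A - Real.log B|
        ≤ q / (q - 1) * (C / (δ - ε)) := by
          refine mul_le_mul_of_nonneg_left (hlog.trans ?_) (by positivity)
          gcongr
      _ = q / ((q - 1) * (δ - ε)) * C := by
          field_simp

end
end
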